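/- arXiv:1602.04583 — 8 statements merged into one kernel-verified Lean document; each statement's English description precedes it below -/
import Mathlib

section
/- If α and β are roots in a reduced crystallographic root system with β ≠ ±α and (β, α^∨)(α, β^∨) = 3, then the span of Φ has dimension 2. -/
noncomputable section

variable {E : Type*} [AddCommGroup E] [Module ℚ E]

/-- The Cartan pairing `(β, α^∨) = 2(β,α)/(α,α)`. -/
def pairingB (B : E →ₗ[ℚ] E →ₗ[ℚ] ℚ) (β α : E) : ℚ := 2 * B β α / B α α

/-- A reduced crystallographic root system in a ℚ-vector space with a
positive-definite symmetric bilinear form. -/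
structure IsRootSystem (B : E →ₗ[ℚ] E →ₗ[ℚ] ℚ) (Φ : Set E) : Prop where
  finite : Φ.Finite
  ne_zero : ∀ α ∈ Φ, α ≠ 0
  symm : ∀ x y : E, B x y = B y x
  posdef : ∀ x : E, x ≠ 0 → 0 < B x x
  reduced : ∀ α ∈ Φ, ∀ t : ℚ, t • α ∈ Φ → t = 1 ∨ t = -1
  cryst : ∀ α ∈ Φ, ∀ β ∈ Φ, ∃ n : ℤ, pairingB B β α = n
  reflMem : ∀ α ∈ Φ, ∀ β ∈ Φ, β - pairingB B β α • α ∈ Φ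

/-- Irreducibility: no nontrivial orthogonal decomposition of `Φ`. -/
def IsIrreducibleRS (B : E →ₗ[ℚ] E →ₗ[ℚ] ℚ) (Φ : Set E) : Prop :=
  ∀ s : Set E, s ⊆ Φ → s.Nonempty →
    (∀ α ∈ s, ∀ β ∈ Φ, β ∉ s → B α β = 0) → Φ ⊆ s

/-- `RootChain Φ γ β p q` says that the `γ`-string through `β` is
`β - qγ, ..., β, ..., β + pγ`. -/
def RootChain (Φ : Set E) (γ β : E) (p q : ℕ) : Prop :=
  (∀ k : ℤ, -(q : ℤ) ≤ k → k ≤ (p : ℤ) → β + (k : ℚ) • γ ∈ Φ) ∧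
  β - ((q : ℚ) + 1) • γ ∉ Φ ∧ β + ((p : ℚ) + 1) • γ ∉ Φ

/-- A set of simple roots `α_i = a i`, indexed by a finite set `I`. -/
structure IsBase {I : Type*} [Fintype I] (Φ : Set E) (a : I → E) : Prop where
  mem : ∀ i, a i ∈ Φ
  indep : LinearIndependent ℚ a
  posneg : ∀ β ∈ Φ, (∃ c : I → ℕ, β = ∑ i, (c i : ℚ) • a i) ∨
    (∃ c : I → ℕ, β = -∑ i, (c i : ℚ) • a i)

namespace RankTwoAux

variable {B : E →ₗ[ℚ] E →ₗ[ℚ] ℚ} {Φ : Set E}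

variable {B : E →ₗ[ℚ] E →ₗ[ℚ] ℚ} {Φ : Set E}

lemma neg_mem (hRS : IsRootSystem B Φ) {x : E} (hx : x ∈ Φ) : -x ∈ Φ := by
  have h := hRS.reflMem x hx x hx
  have hp : pairingB B x x = 2 := by
    have hpos := hRS.posdef x (hRS.ne_zero x hx)
    unfold pairingB
    field_simp
  rw [hp] at h
  have : x - (2 : ℚ) • x = -x := by rw [two_smul]; abel
  rwa [this] at h

lemma cs_strict (hRS : IsRootSystem B Φ) {x y : E} (hy : y ≠ 0)
    (hind : ∀ c : ℚ, x ≠ c • y) : (B x y) ^ 2 < B x x * B y y := by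
  have hyy := hRS.posdef y hy
  set z := B y y • x - B x y • y with hz_def
  have hz : z ≠ 0 := by
    intro h
    apply hind (B x y / B y y)
    have h2 : B y y • x = B x y • y := by
      rw [hz_def, sub_eq_zero] at h; exact h
    have h3 := congrArg (fun w => (B y y)⁻¹ • w) h2
    simpa [smul_smul, inv_mul_cancel₀ hyy.ne', div_eq_inv_mul] using h3
  have h0 := hRS.posdef z hz
  have hexp : B z z = B y y * (B x x * B y y - (B x y) ^ 2) := by
    have hs : B y x = B x y := hRS.symm y x
    simp only [hz_def, map_sub, map_smul, LinearMap.sub_apply, LinearMap.smul_apply,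
      smul_eq_mul, hs]
    ring
  rw [hexp] at h0
  nlinarith

lemma not_isSquare_small (n : ℕ) (hn : 0 < n) (h : ∀ r ≤ n, n ≠ r * r) : ¬ IsSquare n := by
  rintro ⟨r, hr⟩
  exact h r (Nat.le_of_dvd hn ⟨r, hr⟩) hr

lemma nsq2 : ¬ IsSquare (2 : ℕ) := not_isSquare_small 2 (by norm_num) (by decide)
lemma nsq3 : ¬ IsSquare (3 : ℕ) := not_isSquare_small 3 (by norm_num) (by decide)
lemma nsq6 : ¬ IsSquare (6 : ℕ) := not_isSquare_small 6 (by norm_num) (by decide)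
lemma nsq18 : ¬ IsSquare (18 : ℕ) := not_isSquare_small 18 (by norm_num) (by decide)

lemma no_sq {c : ℕ} (hc : ¬ IsSquare c) {X Y : ℤ} (hY : Y ≠ 0) (h : X ^ 2 = (c : ℤ) * Y ^ 2) :
    False := by
  apply hc
  rw [← Rat.isSquare_natCast_iff]
  refine ⟨(X : ℚ) / (Y : ℚ), ?_⟩
  have hY' : (Y : ℚ) ≠ 0 := Int.cast_ne_zero.mpr hY
  have h' : (X : ℚ) ^ 2 = (c : ℚ) * (Y : ℚ) ^ 2 := by exact_mod_cast h
  field_simp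
  linarith [h']

lemma arith (m n P1 P2 P3 Q1 Q2 Q3 : ℤ) (t g : ℚ) (ht : 0 < t) (hg : 0 < g)
    (e1 : (P1 : ℚ) * g = (m : ℚ) ^ 2 * t)
    (e2 : (P2 : ℚ) * g = (3 * (n : ℚ) - m) ^ 2 * t)
    (e3 : (P3 : ℚ) * g = (3 * (n : ℚ) - 2 * m) ^ 2 * t)
    (f1 : (Q1 : ℚ) * g = 3 * (n : ℚ) ^ 2 * t)
    (f2 : (Q2 : ℚ) * g = 3 * ((n : ℚ) - m) ^ 2 * t)
    (f3 : (Q3 : ℚ) * g = 3 * (2 * (n : ℚ) - m) ^ 2 * t)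
    (b1 : P1 ≤ 3) (b2 : P2 ≤ 3) (b3 : P3 ≤ 3)
    (c1 : Q1 ≤ 3) (c2 : Q2 ≤ 3) (c3 : Q3 ≤ 3) :
    m = 0 ∧ n = 0 := by
  have hcast : ∀ A C : ℤ, (A : ℚ) * g = (C : ℚ) * g → A = C := by
    intro A C h
    exact_mod_cast mul_right_cancel₀ hg.ne' h
  rcases eq_or_ne m 0 with hm | hm
  · rcases eq_or_ne n 0 with hn | hn
    · exact ⟨hm, hn⟩
    · exfalso
      subst hm
      have hn' : ((n : ℚ)) ≠ 0 := by exact_mod_cast hn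
      have hq1 : (0 : ℚ) < (Q1 : ℚ) := by
        have h1 : (0:ℚ) < 3 * (n : ℚ) ^ 2 * t := by positivity
        nlinarith
      have hq1' : 1 ≤ Q1 := by exact_mod_cast hq1
      have h43 : Q3 = 4 * Q1 := by
        apply hcast
        push_cast at f1 f3 ⊢
        linear_combination f3 - 4 * f1
      omega
  · rcases eq_or_ne n 0 with hn | hn
    · exfalso
      subst hn
      have hm' : ((m : ℚ)) ≠ 0 := by exact_mod_cast hm
      have hp1 : (0 : ℚ) < (P1 : ℚ) := by
        have h1 : (0:ℚ) < (m : ℚ) ^ 2 * t := by positivity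
        nlinarith
      have hp1' : 1 ≤ P1 := by exact_mod_cast hp1
      have h43 : P3 = 4 * P1 := by
        apply hcast
        push_cast at e1 e3 ⊢
        linear_combination e3 - 4 * e1
      omega
    · exfalso
      have hm' : ((m : ℚ)) ≠ 0 := by exact_mod_cast hm
      have hn' : ((n : ℚ)) ≠ 0 := by exact_mod_cast hn
      have hp1 : (0 : ℚ) < (P1 : ℚ) := by
        have h1 : (0:ℚ) < (m : ℚ) ^ 2 * t := by positivity
        nlinarith
      have hq1 : (0 : ℚ) < (Q1 : ℚ) := by
        have h1 : (0:ℚ) < 3 * (n : ℚ) ^ 2 * t := by positivity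
        nlinarith
      have hp1' : 1 ≤ P1 := by exact_mod_cast hp1
      have hq1' : 1 ≤ Q1 := by exact_mod_cast hq1
      have key : m ^ 2 * Q1 = 3 * n ^ 2 * P1 := by
        have h : ((m ^ 2 * Q1 : ℤ) : ℚ) * g = ((3 * n ^ 2 * P1 : ℤ) : ℚ) * g := by
          push_cast
          linear_combination (m : ℚ) ^ 2 * f1 - 3 * (n : ℚ) ^ 2 * e1
        exact hcast _ _ h
      interval_cases P1 <;> interval_cases Q1
      · exact no_sq nsq3 hn (X := m) (by push_cast; linarith [key])
      · exact no_sq nsq6 hn (X := 2 * m) (by push_cast; linear_combination 2 * key)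
      · have hsq : m ^ 2 = n ^ 2 := by linarith [key]
        have h : (m - n) * (m + n) = 0 := by linear_combination hsq
        rcases mul_eq_zero.mp h with h' | h'
        · have hmn : m = n := by omega
          subst hmn
          push_cast at e1 e2
          have : P2 = 4 * 1 := by
            apply hcast; push_cast; linear_combination e2 - 4 * e1
          omega
        · have hmn : m = -n := by omega
          subst hmn
          push_cast at f1 f3
          have : Q3 = 9 * 3 := by
            apply hcast; push_cast; linear_combination f3 - 9 * f1
          omega
      · exact no_sq nsq6 hn (X := m) (by push_cast; linarith [key])
      · exact no_sq nsq3 hn (X := m) (by push_cast; linarith [key])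
      · exact no_sq nsq2 hn (X := m) (by push_cast; linarith [key])
      · have h : (m - 3 * n) * (m + 3 * n) = 0 := by linear_combination key
        rcases mul_eq_zero.mp h with h' | h'
        · have hmn : m = 3 * n := by omega
          subst hmn
          push_cast at f1 f2
          have : Q2 = 4 * 1 := by
            apply hcast; push_cast; linear_combination f2 - 4 * f1
          omega
        · have hmn : m = -(3 * n) := by omega
          subst hmn
          push_cast at f1 f2
          have : Q2 = 16 * 1 := by
            apply hcast; push_cast; linear_combination f2 - 16 * f1
          omega
      · exact no_sq nsq18 hn (X := 2 * m) (by push_cast; linear_combination 2 * key)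
      · exact no_sq nsq3 hn (X := m) (by push_cast; linarith [key])

lemma step {g : ℚ} (hg : 0 < g) (F K : ℤ) (s : ℚ) (hs : 0 < s)
    (hKg : (K : ℚ) * g = (F : ℚ) * s) (hlt : ((F : ℚ) * s) ^ 2 < 4 * (g * s)) :
    ((F * K : ℤ) : ℚ) * g = (F : ℚ) ^ 2 * s ∧ (F * K : ℤ) ≤ 3 := by
  constructor
  · push_cast
    linear_combination (F : ℚ) * hKg
  · have h1 : ((F * K : ℤ) : ℚ) * (g * s) = ((F : ℚ) * s) ^ 2 := by
      push_cast
      linear_combination ((F : ℚ) * s) * hKg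
    have hgs : (0 : ℚ) < g * s := by positivity
    have h3 : ((F * K : ℤ) : ℚ) < 4 := by
      have h2 : ((F * K : ℤ) : ℚ) * (g * s) < 4 * (g * s) := by rw [h1]; exact hlt
      nlinarith
    have h4 : (F * K : ℤ) < 4 := by exact_mod_cast h3
    omega

set_option maxHeartbeats 2000000 in
/-- Any root not in the span of a `G₂`-pair `u, v` is orthogonal to both. -/
lemma ortho (hRS : IsRootSystem B Φ) {u v : E} (hu : u ∈ Φ) (hv : v ∈ Φ)
    (huv : B u v = 3 / 2 * B u u) (hvv : B v v = 3 * B u u)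
    {γ : E} (hγ : γ ∈ Φ) (hγP : γ ∉ (Submodule.span ℚ ({u, v} : Set E) : Set E)) :
    B γ u = 0 ∧ B γ v = 0 := by
  have ht : 0 < B u u := hRS.posdef u (hRS.ne_zero u hu)
  have hg : 0 < B γ γ := hRS.posdef γ (hRS.ne_zero γ hγ)
  have hvu : B v u = 3 / 2 * B u u := by rw [hRS.symm v u]; exact huv
  -- memberships of the G2 roots
  have hp_vu : pairingB B v u = 3 := by
    unfold pairingB; rw [hvu, div_eq_iff ht.ne']; ring
  have h5 : v - (3 : ℚ) • u ∈ Φ := by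
    have h := hRS.reflMem u hu v hv
    rwa [hp_vu] at h
  have hp_uv : pairingB B u v = 1 := by
    unfold pairingB
    rw [huv, hvv, div_eq_iff (by positivity : (3 : ℚ) * B u u ≠ 0)]; ring
  have h2' : u - v ∈ Φ := by
    have h := hRS.reflMem v hv u hu
    rwa [hp_uv, one_smul] at h
  have h2 : v - u ∈ Φ := by
    have h := neg_mem hRS h2'
    rwa [neg_sub] at h
  have hp_vuu : pairingB B (v - u) u = 1 := by
    unfold pairingB
    simp only [map_sub, LinearMap.sub_apply]
    rw [div_eq_iff ht.ne']
    linarith [hvu]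
  have h3 : v - (2 : ℚ) • u ∈ Φ := by
    have h := hRS.reflMem u hu (v - u) h2
    rw [hp_vuu, one_smul] at h
    have he : v - u - u = v - (2 : ℚ) • u := by rw [two_smul]; abel
    rwa [he] at h
  -- norms of the G2 roots
  have n2 : B (v - u) (v - u) = B u u := by
    simp only [map_sub, LinearMap.sub_apply]
    linarith [hvu, huv, hvv]
  have n3 : B (v - (2:ℚ) • u) (v - (2:ℚ) • u) = B u u := by
    simp only [map_sub, map_smul, LinearMap.sub_apply, LinearMap.smul_apply, smul_eq_mul]
    linarith [hvu, huv, hvv]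
  have n5 : B (v - (3:ℚ) • u) (v - (3:ℚ) • u) = 3 * B u u := by
    simp only [map_sub, map_smul, LinearMap.sub_apply, LinearMap.smul_apply, smul_eq_mul]
    linarith [hvu, huv, hvv]
  have hp6 : pairingB B (v - (3:ℚ) • u) (v - (2:ℚ) • u) = 3 := by
    unfold pairingB
    rw [n3]
    have hB : B (v - (3:ℚ) • u) (v - (2:ℚ) • u) = 3 / 2 * B u u := by
      simp only [map_sub, map_smul, LinearMap.sub_apply, LinearMap.smul_apply, smul_eq_mul]
      linarith [hvu, huv, hvv]
    rw [hB, div_eq_iff ht.ne']; ring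
  have h6 : (2 : ℚ) • v - (3 : ℚ) • u ∈ Φ := by
    have h := hRS.reflMem (v - (2:ℚ) • u) h3 (v - (3:ℚ) • u) h5
    rw [hp6] at h
    have h' := neg_mem hRS h
    have he : -((v - (3:ℚ) • u) - (3 : ℚ) • (v - (2:ℚ) • u)) = (2:ℚ) • v - (3:ℚ) • u := by
      module
    rwa [he] at h'
  have n6 : B ((2:ℚ) • v - (3:ℚ) • u) ((2:ℚ) • v - (3:ℚ) • u) = 3 * B u u := by
    simp only [map_sub, map_smul, LinearMap.sub_apply, LinearMap.smul_apply, smul_eq_mul]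
    linarith [hvu, huv, hvv]
  -- span membership of G2 roots
  have husp : u ∈ Submodule.span ℚ ({u, v} : Set E) :=
    Submodule.subset_span (by simp)
  have hvsp : v ∈ Submodule.span ℚ ({u, v} : Set E) :=
    Submodule.subset_span (by simp)
  have sp2 : v - u ∈ Submodule.span ℚ ({u, v} : Set E) := sub_mem hvsp husp
  have sp3 : v - (2:ℚ) • u ∈ Submodule.span ℚ ({u, v} : Set E) :=
    sub_mem hvsp (Submodule.smul_mem _ _ husp)
  have sp5 : v - (3:ℚ) • u ∈ Submodule.span ℚ ({u, v} : Set E) :=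
    sub_mem hvsp (Submodule.smul_mem _ _ husp)
  have sp6 : (2:ℚ) • v - (3:ℚ) • u ∈ Submodule.span ℚ ({u, v} : Set E) :=
    sub_mem (Submodule.smul_mem _ _ hvsp) (Submodule.smul_mem _ _ husp)
  -- the key extraction : backward pairings
  have key : ∀ δ : E, δ ∈ Φ → δ ∈ Submodule.span ℚ ({u, v} : Set E) →
      ∃ K : ℤ, (K : ℚ) * B γ γ = 2 * B γ δ ∧ (2 * B γ δ) ^ 2 < 4 * (B γ γ * B δ δ) := by
    intro δ hδ hδsp
    obtain ⟨K, hK⟩ := hRS.cryst γ hγ δ hδ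
    have hsym : B δ γ = B γ δ := hRS.symm δ γ
    refine ⟨K, ?_, ?_⟩
    · unfold pairingB at hK
      rw [hsym, div_eq_iff hg.ne'] at hK
      linarith [hK]
    · have hδ0 : δ ≠ 0 := hRS.ne_zero δ hδ
      have hind : ∀ c : ℚ, γ ≠ c • δ := by
        intro c hc
        exact hγP (by rw [hc]; exact Submodule.smul_mem _ c hδsp)
      have hcs := cs_strict hRS hδ0 hind
      nlinarith [hcs]
  -- forward pairings with u and v
  obtain ⟨m, hm⟩ := hRS.cryst u hu γ hγ
  obtain ⟨n, hn⟩ := hRS.cryst v hv γ hγ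
  have hm2 : 2 * B γ u = (m : ℚ) * B u u := by
    unfold pairingB at hm
    rw [div_eq_iff ht.ne'] at hm
    linarith [hm]
  have hn2 : 2 * B γ v = 3 * (n : ℚ) * B u u := by
    unfold pairingB at hn
    rw [hvv, div_eq_iff (by positivity : (3:ℚ) * B u u ≠ 0)] at hn
    linarith [hn]
  -- the six backward pairings
  obtain ⟨K1, w1, c1⟩ := key u hu husp
  obtain ⟨K2, w2, c2⟩ := key (v - u) h2 sp2
  obtain ⟨K3, w3, c3⟩ := key (v - (2:ℚ) • u) h3 sp3
  obtain ⟨K4, w4, c4⟩ := key v hv hvsp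
  obtain ⟨K5, w5, c5⟩ := key (v - (3:ℚ) • u) h5 sp5
  obtain ⟨K6, w6, c6⟩ := key ((2:ℚ) • v - (3:ℚ) • u) h6 sp6
  -- rewrite norms first, then expand
  rw [n2] at c2
  rw [n3] at c3
  rw [hvv] at c4
  rw [n5] at c5
  rw [n6] at c6
  simp only [map_sub, map_smul, LinearMap.sub_apply, LinearMap.smul_apply, smul_eq_mul]
    at w2 w3 w5 w6 c2 c3 c5 c6
  set g := B γ γ with hgdef
  set t := B u u with htdef
  have v1 : (K1 : ℚ) * g = (m : ℚ) * t := by linarith [w1, hm2]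
  have v2 : (K2 : ℚ) * g = (3 * (n : ℚ) - m) * t := by linarith [w2, hm2, hn2]
  have v3 : (K3 : ℚ) * g = (3 * (n : ℚ) - 2 * m) * t := by linarith [w3, hm2, hn2]
  have v4 : (K4 : ℚ) * g = (n : ℚ) * (3 * t) := by linarith [w4, hn2]
  have v5 : (K5 : ℚ) * g = ((n : ℚ) - m) * (3 * t) := by linarith [w5, hm2, hn2]
  have v6 : (K6 : ℚ) * g = (2 * (n : ℚ) - m) * (3 * t) := by linarith [w6, hm2, hn2]
  have he1 : 2 * B γ u = (m : ℚ) * t := hm2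
  have he2 : 2 * (B γ v - B γ u) = (3 * (n : ℚ) - m) * t := by linarith [hm2, hn2]
  have he3 : 2 * (B γ v - 2 * B γ u) = (3 * (n : ℚ) - 2 * m) * t := by linarith [hm2, hn2]
  have he4 : 2 * B γ v = (n : ℚ) * (3 * t) := by linarith [hn2]
  have he5 : 2 * (B γ v - 3 * B γ u) = ((n : ℚ) - m) * (3 * t) := by linarith [hm2, hn2]
  have he6 : 2 * (2 * B γ v - 3 * B γ u) = (2 * (n : ℚ) - m) * (3 * t) := by
    linarith [hm2, hn2]
  rw [he1] at c1
  rw [he2] at c2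
  rw [he3] at c3
  rw [he4] at c4
  rw [he5] at c5
  rw [he6] at c6
  have ht3 : (0 : ℚ) < 3 * t := by linarith
  obtain ⟨E1, B1⟩ := step hg m K1 t ht v1 c1
  obtain ⟨E2, B2⟩ := step hg (3 * n - m) K2 t ht
    (by push_cast; linarith [v2]) (by push_cast; linarith [c2])
  obtain ⟨E3, B3⟩ := step hg (3 * n - 2 * m) K3 t ht
    (by push_cast; linarith [v3]) (by push_cast; linarith [c3])
  obtain ⟨E4, B4⟩ := step hg n K4 (3 * t) ht3 v4 c4
  obtain ⟨E5, B5⟩ := step hg (n - m) K5 (3 * t) ht3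
    (by push_cast; linarith [v5]) (by push_cast; linarith [c5])
  obtain ⟨E6, B6⟩ := step hg (2 * n - m) K6 (3 * t) ht3
    (by push_cast; linarith [v6]) (by push_cast; linarith [c6])
  obtain ⟨hm0, hn0⟩ := arith m n (m * K1) ((3 * n - m) * K2) ((3 * n - 2 * m) * K3)
    (n * K4) ((n - m) * K5) ((2 * n - m) * K6) t g ht hg
    (by push_cast at E1 ⊢; linarith [E1])
    (by push_cast at E2 ⊢; linarith [E2])
    (by push_cast at E3 ⊢; linarith [E3])
    (by push_cast at E4 ⊢; linarith [E4])
    (by push_cast at E5 ⊢; linarith [E5])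
    (by push_cast at E6 ⊢; linarith [E6])
    B1 B2 B3 B4 B5 B6
  constructor
  · rw [hm0] at hm2
    push_cast at hm2
    linarith [hm2]
  · rw [hn0] at hn2
    push_cast at hn2
    linarith [hn2]

lemma rank_aux (hRS : IsRootSystem B Φ) (hirr : IsIrreducibleRS B Φ)
    {u v : E} (hu : u ∈ Φ) (hv : v ∈ Φ)
    (huv : B u v = 3 / 2 * B u u) (hvv : B v v = 3 * B u u) :
    Module.finrank ℚ (Submodule.span ℚ Φ) = 2 := by
  have ht : 0 < B u u := hRS.posdef u (hRS.ne_zero u hu)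
  have hvu : B v u = 3 / 2 * B u u := by rw [hRS.symm v u]; exact huv
  have husp : u ∈ Submodule.span ℚ ({u, v} : Set E) := Submodule.subset_span (by simp)
  have hvsp : v ∈ Submodule.span ℚ ({u, v} : Set E) := Submodule.subset_span (by simp)
  have hsub : Φ ⊆ (Submodule.span ℚ ({u, v} : Set E) : Set E) := by
    have h := hirr (Φ ∩ (Submodule.span ℚ ({u, v} : Set E) : Set E))
      Set.inter_subset_left ⟨u, hu, husp⟩ ?_
    · exact fun x hx => (h hx).2
    · intro x hx y hy hys
      have hyP : y ∉ (Submodule.span ℚ ({u, v} : Set E) : Set E) := fun hh => hys ⟨hy, hh⟩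
      obtain ⟨h1, h2⟩ := ortho hRS hu hv huv hvv hy hyP
      obtain ⟨a, b, hab⟩ := Submodule.mem_span_pair.mp hx.2
      rw [← hab]
      simp only [map_add, map_smul, LinearMap.add_apply, LinearMap.smul_apply, smul_eq_mul]
      rw [hRS.symm u y, hRS.symm v y, h1, h2]
      ring
  have hspan : Submodule.span ℚ Φ = Submodule.span ℚ ({u, v} : Set E) := by
    apply le_antisymm
    · exact Submodule.span_le.mpr hsub
    · apply Submodule.span_le.mpr
      rintro x hx
      rcases hx with rfl | hx
      · exact Submodule.subset_span hu
      · rw [Set.mem_singleton_iff] at hx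
        subst hx
        exact Submodule.subset_span hv
  have hind : LinearIndependent ℚ ![u, v] := by
    rw [LinearIndependent.pair_iff]
    intro s r hsr
    have e1 : B u (s • u + r • v) = 0 := by rw [hsr]; simp
    have e2 : B v (s • u + r • v) = 0 := by rw [hsr]; simp
    simp only [map_add, map_smul, smul_eq_mul] at e1 e2
    rw [huv] at e1
    rw [hvu, hvv] at e2
    have hr : r * B u u = 0 := by linarith
    have hr0 : r = 0 := by
      rcases mul_eq_zero.mp hr with h | h
      · exact h
      · exact absurd h ht.ne'
    subst hr0
    have hs : s * B u u = 0 := by linarith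
    have hs0 : s = 0 := by
      rcases mul_eq_zero.mp hs with h | h
      · exact h
      · exact absurd h ht.ne'
    exact ⟨hs0, rfl⟩
  rw [hspan]
  have hrange : Set.range ![u, v] = ({u, v} : Set E) := by
    ext x
    simp [Matrix.range_cons, Matrix.range_empty]
    tauto
  rw [← hrange, finrank_span_eq_card hind]
  simp

end RankTwoAux

open RankTwoAux in
theorem rank_two_of_cartan_product_eq_three
    (B : E →ₗ[ℚ] E →ₗ[ℚ] ℚ) (Φ : Set E) (hRS : IsRootSystem B Φ)
    (hirr : IsIrreducibleRS B Φ)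
    {α β : E} (hα : α ∈ Φ) (hβ : β ∈ Φ) (h1 : β ≠ α) (h2 : β ≠ -α)
    (h3 : pairingB B β α * pairingB B α β = 3) :
    Module.finrank ℚ (Submodule.span ℚ Φ) = 2 := by

  have ha : 0 < B α α := hRS.posdef α (hRS.ne_zero α hα)
  have hb : 0 < B β β := hRS.posdef β (hRS.ne_zero β hβ)
  have hsym : B β α = B α β := hRS.symm β α
  obtain ⟨p, hp⟩ := hRS.cryst α hα β hβ
  obtain ⟨q, hq⟩ := hRS.cryst β hβ α hα
  have hpq : (p : ℚ) * q = 3 := by rw [← hp, ← hq]; exact h3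
  have hpqZ : p * q = 3 := by exact_mod_cast hpq
  unfold pairingB at hp hq
  rw [div_eq_iff ha.ne'] at hp
  rw [div_eq_iff hb.ne'] at hq
  have hαβ' : -β ∈ Φ := neg_mem hRS hβ
  have hαα' : -α ∈ Φ := neg_mem hRS hα
  have hpd : p ∣ 3 := ⟨q, hpqZ.symm⟩
  have hb1 : p ≤ 3 := Int.le_of_dvd (by norm_num) hpd
  have hb2 : -3 ≤ p := by
    have hnd : -p ∣ 3 := (neg_dvd).mpr hpd
    have := Int.le_of_dvd (by norm_num) hnd
    omega
  interval_cases p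
  -- p = -3, q = -1
  · have hq1 : q = -1 := by omega
    subst hq1
    push_cast at hp hq
    refine rank_aux hRS hirr hα hαβ' ?_ ?_
    · simp only [map_neg]
      linarith [hp, hsym]
    · simp only [map_neg, LinearMap.neg_apply, neg_neg]
      linarith [hq, hsym, hp]
  · omega
  -- p = -1, q = -3
  · have hq1 : q = -3 := by omega
    subst hq1
    push_cast at hp hq
    refine rank_aux hRS hirr hβ hαα' ?_ ?_
    · simp only [map_neg]
      linarith [hp, hq, hsym]
    · simp only [map_neg, LinearMap.neg_apply, neg_neg]
      linarith [hq, hsym, hp]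
  · omega
  -- p = 1, q = 3
  · have hq1 : q = 3 := by omega
    subst hq1
    push_cast at hp hq
    refine rank_aux hRS hirr hβ hα ?_ ?_
    · linarith [hp, hq, hsym]
    · linarith [hp, hq, hsym]
  · omega
  -- p = 3, q = 1
  · have hq1 : q = 1 := by omega
    subst hq1
    push_cast at hp hq
    refine rank_aux hRS hirr hα hβ ?_ ?_
    · linarith [hp, hq, hsym]
    · linarith [hp, hq, hsym]
end
end

section
/- Let α, β be roots with β ≠ ±α, and let p, q be the lengths of the α-string through β as above. If p + q = 3, then the span of Φ has dimension 2. -/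
noncomputable section

variable {E : Type*} [AddCommGroup E] [Module ℚ E]

namespace RankTwoProof

variable {B : E →ₗ[ℚ] E →ₗ[ℚ] ℚ} {Φ : Set E}

lemma cs_strict (hRS : IsRootSystem B Φ) {x y : E} (hy : y ≠ 0)
    (hxy : ∀ t : ℚ, x ≠ t • y) : B x y ^ 2 < B x x * B y y := by
  have hyy : 0 < B y y := hRS.posdef y hy
  have hw0 : B y y • x - B x y • y ≠ 0 := by
    intro h
    rw [sub_eq_zero] at h
    apply hxy (B x y / B y y)
    calc x = (B y y)⁻¹ • (B y y • x) := by
            rw [smul_smul, inv_mul_cancel₀ hyy.ne', one_smul]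
    _ = (B y y)⁻¹ • (B x y • y) := by rw [h]
    _ = (B x y / B y y) • y := by rw [smul_smul, div_eq_inv_mul]
  have hpos := hRS.posdef _ hw0
  have hsym := hRS.symm x y
  simp only [map_sub, map_smul, LinearMap.sub_apply, LinearMap.smul_apply,
    smul_eq_mul] at hpos
  rw [hsym] at hpos
  rw [hsym]
  nlinarith [hpos, hyy]

lemma cartan_lt (hRS : IsRootSystem B Φ) {x y : E} (hx0 : x ≠ 0) (hy0 : y ≠ 0)
    (hxy : ∀ t : ℚ, x ≠ t • y) :
    0 ≤ pairingB B x y * pairingB B y x ∧ pairingB B x y * pairingB B y x < 4 := by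
  have hxx := hRS.posdef x hx0
  have hyy := hRS.posdef y hy0
  have hcs := cs_strict hRS hy0 hxy
  have hsym := hRS.symm x y
  unfold pairingB
  rw [hsym] at hcs
  constructor
  · rw [div_mul_div_comm]
    apply div_nonneg _ (le_of_lt (mul_pos hyy hxx))
    rw [hsym]
    nlinarith [sq_nonneg (B y x)]
  · rw [div_mul_div_comm, div_lt_iff₀ (mul_pos hyy hxx), hsym]
    nlinarith

lemma pairing_int_bound (hRS : IsRootSystem B Φ) {x y : E} (hx0 : x ≠ 0) (hy0 : y ≠ 0)
    (hxy : ∀ t : ℚ, x ≠ t • y)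
    {n n' : ℤ} (hn : pairingB B x y = n) (hn' : pairingB B y x = n') :
    -3 ≤ n ∧ n ≤ 3 := by
  obtain ⟨hge, hlt⟩ := cartan_lt hRS hx0 hy0 hxy
  rw [hn, hn'] at hge hlt
  have h0' : 0 ≤ n * n' := by exact_mod_cast hge
  have h3' : n * n' < 4 := by exact_mod_cast hlt
  by_cases hnz : n = 0
  · omega
  · have hBxy : B x y ≠ 0 := by
      intro h
      apply hnz
      have h2 : pairingB B x y = 0 := by unfold pairingB; rw [h]; simp
      rw [hn] at h2; exact_mod_cast h2
    have hn'z : n' ≠ 0 := by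
      intro h
      rw [h] at hn'
      unfold pairingB at hn'
      have hxx : B x x ≠ 0 := (hRS.posdef x hx0).ne'
      push_cast at hn'
      rw [div_eq_zero_iff] at hn'
      rcases hn' with h' | h'
      · exact hBxy (by rw [hRS.symm x y]; linarith)
      · exact hxx h'
    have h1 : 1 ≤ |n'| := Int.one_le_abs hn'z
    have h2 : |n| ≤ |n| * |n'| := le_mul_of_one_le_right (abs_nonneg n) h1
    rw [← abs_mul, abs_of_nonneg h0'] at h2
    have : |n| ≤ 3 := by omega
    exact abs_le.mp this

lemma int_sq_one {n : ℤ} (h : n ≠ 0) : 1 ≤ n * n := by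
  rcases h.lt_or_gt with h | h <;> nlinarith

set_option maxHeartbeats 1000000 in
/-- The crunch: the integer constraints exclude any root outside the plane of a G₂ pair
having nonzero pairing with the pair. -/
lemma key (hRS : IsRootSystem B Φ) {α γ : E} (hα : α ∈ Φ) (hγ : γ ∈ Φ)
    (hγγ : B γ γ = 3 * B α α) (hγα : 2 * B γ α = -3 * B α α)
    {δ : E} (hδ : δ ∈ Φ) (hδV : δ ∉ Submodule.span ℚ ({α, γ} : Set E)) :
    B δ α = 0 ∧ B δ γ = 0 := by
  have hα0 : α ≠ 0 := hRS.ne_zero α hα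
  have hδ0 : δ ≠ 0 := hRS.ne_zero δ hδ
  have hMpos : 0 < B α α := hRS.posdef α hα0
  have hMne : B α α ≠ 0 := hMpos.ne'
  have hNpos : 0 < B δ δ := hRS.posdef δ hδ0
  have hNne : B δ δ ≠ 0 := hNpos.ne'
  have hγγne : B γ γ ≠ 0 := by rw [hγγ]; positivity
  obtain ⟨a, ha⟩ := hRS.cryst α hα δ hδ
  obtain ⟨c, hc⟩ := hRS.cryst γ hγ δ hδ
  obtain ⟨a', ha'⟩ := hRS.cryst δ hδ α hα
  obtain ⟨c', hc'⟩ := hRS.cryst δ hδ γ hγ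
  unfold pairingB at ha hc ha' hc'
  rw [div_eq_iff hMne] at ha
  rw [div_eq_iff hγγne, hγγ] at hc
  rw [div_eq_iff hNne] at ha'
  rw [div_eq_iff hNne] at hc'
  -- ha : 2 * B δ α = a * B α α ; hc : 2 * B δ γ = c * (3 * B α α)
  -- ha' : 2 * B α δ = a' * B δ δ ; hc' : 2 * B γ δ = c' * B δ δ
  have hsad := hRS.symm α δ
  have hsgd := hRS.symm γ δ
  have hsag := hRS.symm α γ
  have haa' : (a : ℚ) * B α α = (a' : ℚ) * B δ δ := by
    rw [← ha, ← ha', hsad]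
  have hcc' : 3 * (c : ℚ) * B α α = (c' : ℚ) * B δ δ := by
    rw [← hc', hsgd]; linarith [hc]
  -- the projection of δ onto span{α,γ}
  have hw0 : δ - ((2*(a:ℚ) + 3*c) • α + ((a:ℚ) + 2*c) • γ) ≠ 0 := by
    intro h
    apply hδV
    rw [Submodule.mem_span_pair]
    exact ⟨2*(a:ℚ) + 3*c, (a:ℚ) + 2*c, by rw [sub_eq_zero] at h; exact h.symm⟩
  have hwpos := hRS.posdef _ hw0
  have hexp : B (δ - ((2*(a:ℚ) + 3*c) • α + ((a:ℚ) + 2*c) • γ))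
      (δ - ((2*(a:ℚ) + 3*c) • α + ((a:ℚ) + 2*c) • γ)) =
      B δ δ - B α α * ((a:ℚ)*a + 3*a*c + 3*c*c) := by
    simp only [map_sub, map_add, map_smul, LinearMap.sub_apply, LinearMap.add_apply,
      LinearMap.smul_apply, smul_eq_mul]
    rw [hsad, hsgd, hsag]
    linear_combination (-(2*(a:ℚ)+3*c)) * ha + (-((a:ℚ)+2*c)) * hc +
      ((2*(a:ℚ)+3*c)*((a:ℚ)+2*c)) * hγα + (((a:ℚ)+2*c)*((a:ℚ)+2*c)) * hγγ
  rw [hexp] at hwpos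
  -- key inequality
  have hkey : B α α * ((a:ℚ)*a + 3*a*c + 3*c*c) < B δ δ := by linarith
  have hac : a = 0 ∧ c = 0 := by
    by_contra hcon
    by_cases haz : a = 0
    · have hcz : c ≠ 0 := fun h => hcon ⟨haz, h⟩
      have hc'z : c' ≠ 0 := by
        intro h
        rw [h] at hcc'
        push_cast at hcc'
        simp at hcc'
        rcases hcc' with h' | h'
        · exact hcz (by exact_mod_cast h')
        · exact hMne h'
      have hc'1 : (1:ℚ) ≤ (c':ℚ) * c' := by exact_mod_cast int_sq_one hc'z
      have hc1 : (1:ℚ) ≤ (c:ℚ) * c := by exact_mod_cast int_sq_one hcz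
      have hsq : (3*(c:ℚ)*(B α α))^2 = ((c':ℚ)*c') * (B δ δ)^2 := by
        rw [hcc']; ring
      have haz' : (a:ℚ) = 0 := by exact_mod_cast haz
      rw [haz'] at hkey
      nlinarith [hkey, hMpos, hNpos, hsq, hc'1, hc1, mul_pos hMpos hNpos]
    · -- a ≠ 0
      have ha'z : a' ≠ 0 := by
        intro h
        rw [h] at haa'
        push_cast at haa'
        simp at haa'
        rcases haa' with h' | h'
        · exact haz (by exact_mod_cast h')
        · exact hMne h'
      have ha'1 : (1:ℚ) ≤ (a':ℚ) * a' := by exact_mod_cast int_sq_one ha'z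
      have ha1 : (1:ℚ) ≤ (a:ℚ) * a := by exact_mod_cast int_sq_one haz
      have hsqa : ((a:ℚ)*(B α α))^2 = ((a':ℚ)*a') * (B δ δ)^2 := by
        rw [haa']; ring
      have hN2 : (B δ δ)^2 ≤ ((a:ℚ)*a) * (B α α)^2 := by nlinarith [hsqa, ha'1, sq_nonneg (B δ δ)]
      -- Q ≥ 1 over ℤ
      have h4Qa : 1 ≤ 4*(a*a + 3*a*c + 3*c*c) := by
        nlinarith [sq_nonneg (a + 2*c), int_sq_one haz]
      have hQ1 : 1 ≤ a*a + 3*a*c + 3*c*c := by omega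
      have hQ1' : (1:ℚ) ≤ (a:ℚ)*a + 3*a*c + 3*c*c := by exact_mod_cast hQ1
      -- Q² < a² over ℚ then ℤ
      have hMQpos : 0 ≤ B α α * ((a:ℚ)*a + 3*a*c + 3*c*c) := by nlinarith [hMpos, hQ1']
      have hsq2 : (B α α * ((a:ℚ)*a + 3*a*c + 3*c*c)) * (B α α * ((a:ℚ)*a + 3*a*c + 3*c*c))
          < B δ δ * B δ δ := mul_self_lt_mul_self hMQpos hkey
      have hQlt : ((a:ℚ)*a + 3*a*c + 3*c*c) * ((a:ℚ)*a + 3*a*c + 3*c*c) < (a:ℚ)*a := by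
        have h2 : (((a:ℚ)*a + 3*a*c + 3*c*c) * ((a:ℚ)*a + 3*a*c + 3*c*c)) * (B α α * B α α)
            < ((a:ℚ)*a) * (B α α * B α α) := by nlinarith [hsq2, hN2]
        exact lt_of_mul_lt_mul_right h2 (le_of_lt (mul_pos hMpos hMpos))
      have hQltZ : (a*a + 3*a*c + 3*c*c) * (a*a + 3*a*c + 3*c*c) < a*a := by
        exact_mod_cast hQlt
      -- integer crunch : a + 2c = 0, a*a = 4, Q = 1
      have hcrunch : a + 2*c = 0 ∧ a*a = 4 ∧ a*a + 3*a*c + 3*c*c = 1 := by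
        have h3 : a*a ≤ 4*(a*a + 3*a*c + 3*c*c) := by nlinarith [sq_nonneg (a + 2*c)]
        have hQ3 : a*a + 3*a*c + 3*c*c ≤ 3 := by nlinarith [hQ1, hQltZ, h3]
        have ha3 : a ≤ 3 := by nlinarith [h3, hQ3]
        have ha3' : -3 ≤ a := by nlinarith [h3, hQ3]
        have hc2 : c ≤ 2 := by nlinarith [hQ3, sq_nonneg (2*a + 3*c)]
        have hc2' : -2 ≤ c := by nlinarith [hQ3, sq_nonneg (2*a + 3*c)]
        interval_cases a <;> interval_cases c <;> omega
      obtain ⟨hs0, ha4, hQone⟩ := hcrunch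
      have hQoneQ : (a:ℚ)*a + 3*a*c + 3*c*c = 1 := by exact_mod_cast hQone
      rw [hQoneQ, mul_one] at hkey
      -- 3 c a' = a c'
      have hrel : 3*(c:ℚ)*a' = (a:ℚ)*c' := by
        have h' : (3*(c:ℚ)*a') * B δ δ = ((a:ℚ)*c') * B δ δ := by
          calc (3*(c:ℚ)*a') * B δ δ = 3*(c:ℚ) * ((a':ℚ) * B δ δ) := by ring
          _ = 3*(c:ℚ) * ((a:ℚ) * B α α) := by rw [← haa']
          _ = (a:ℚ) * (3*(c:ℚ) * B α α) := by ring
          _ = (a:ℚ) * ((c':ℚ) * B δ δ) := by rw [hcc']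
          _ = ((a:ℚ)*c') * B δ δ := by ring
        exact mul_right_cancel₀ hNne h'
      have hrelZ : 3*c*a' = a*c' := by exact_mod_cast hrel
      -- a = -2c, a ≠ 0 so c ≠ 0 ; 3a' = -2c' ⇒ a' even
      have hcz : c ≠ 0 := by omega
      have h2c' : 3*a' = -(2*c') := by
        have h' : c * (3*a') = c * (-(2*c')) := by
          have : a = -(2*c) := by omega
          rw [this] at hrelZ; linarith [hrelZ]
        exact mul_left_cancel₀ hcz h'
      have ha'4 : 4 ≤ a'*a' := by
        have : a' ≤ -2 ∨ 2 ≤ a' := by omega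
        rcases this with h' | h' <;> nlinarith
      have ha'4Q : (4:ℚ) ≤ (a':ℚ)*a' := by exact_mod_cast ha'4
      have ha4Q : (a:ℚ)*a = 4 := by exact_mod_cast ha4
      nlinarith [hsqa, hkey, hMpos, hNpos, ha'4Q, ha4Q, sq_nonneg (B δ δ)]
  obtain ⟨ha0, hc0⟩ := hac
  have ha0' : (a:ℚ) = 0 := by exact_mod_cast ha0
  have hc0' : (c:ℚ) = 0 := by exact_mod_cast hc0
  rw [ha0'] at ha; rw [hc0'] at hc
  constructor <;> linarith

end RankTwoProof

open RankTwoProof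

set_option maxHeartbeats 1000000

theorem rank_two_of_root_string_length_three
    (B : E →ₗ[ℚ] E →ₗ[ℚ] ℚ) (Φ : Set E) (hRS : IsRootSystem B Φ)
    (hirr : IsIrreducibleRS B Φ)
    {α β : E} (hα : α ∈ Φ) (hβ : β ∈ Φ) (h1 : β ≠ α) (h2 : β ≠ -α)
    (p q : ℕ) (hchain : RootChain Φ α β p q) (hpq : p + q = 3) :
    Module.finrank ℚ (Submodule.span ℚ Φ) = 2 := by
  obtain ⟨hmem, -, -⟩ := hchain
  have hα0 : α ≠ 0 := hRS.ne_zero α hα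
  have hMpos : 0 < B α α := hRS.posdef α hα0
  have hMne : B α α ≠ 0 := hMpos.ne'
  obtain ⟨m, hm⟩ := hRS.cryst α hα β hβ
  unfold pairingB at hm
  rw [div_eq_iff hMne] at hm
  -- not-parallel helper
  have hnp : ∀ k : ℤ, ∀ t : ℚ, β + (k:ℚ) • α ≠ t • α := by
    intro k t h
    have hβeq : β = (t - (k:ℚ)) • α := by
      rw [sub_smul]
      rw [eq_sub_iff_add_eq]
      exact h
    rcases hRS.reduced α hα (t - (k:ℚ)) (hβeq ▸ hβ) with h' | h'
    · apply h1; rw [hβeq, h', one_smul]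
    · apply h2; rw [hβeq, h', neg_smul, one_smul]
  -- pairing along the string
  have hpx : ∀ k : ℤ, pairingB B (β + (k:ℚ) • α) α = ((m + 2*k : ℤ) : ℚ) := by
    intro k
    unfold pairingB
    rw [div_eq_iff hMne]
    simp only [map_add, map_smul, LinearMap.add_apply, LinearMap.smul_apply, smul_eq_mul]
    push_cast
    ring_nf
    ring_nf at hm
    linear_combination hm
  have hbnd : ∀ k : ℤ, β + (k:ℚ) • α ∈ Φ → -3 ≤ m + 2*k ∧ m + 2*k ≤ 3 := by
    intro k hk
    have hx0 : β + (k:ℚ) • α ≠ 0 := hRS.ne_zero _ hk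
    obtain ⟨n', hn'⟩ := hRS.cryst (β + (k:ℚ) • α) hk α hα
    exact pairing_int_bound hRS hx0 hα0 (hnp k) (hpx k) hn'
  have hmemp : β + ((p:ℤ):ℚ) • α ∈ Φ := hmem p (by omega) le_rfl
  have hmemq : β + ((-(q:ℤ)):ℚ) • α ∈ Φ := hmem (-(q:ℤ)) le_rfl (by omega)
  have hp3 := hbnd p hmemp
  have hq3 := hbnd (-(q:ℤ)) hmemq
  have hpq' : (p:ℤ) + (q:ℤ) = 3 := by exact_mod_cast hpq
  have hmq : m + 2*(-(q:ℤ)) = -3 := by omega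
  -- γ := bottom of the string
  have hγmem := hmemq
  push_cast at hγmem
  set γ : E := β + (-(q:ℚ)) • α with hγdef
  have hγ : γ ∈ Φ := hγmem
  have hγ0 : γ ≠ 0 := hRS.ne_zero γ hγ
  have hγpairing : pairingB B γ α = -3 := by
    have h := hpx (-(q:ℤ))
    rw [hmq] at h
    push_cast at h
    exact h
  have hγα : 2 * B γ α = -3 * B α α := by
    unfold pairingB at hγpairing
    rw [div_eq_iff hMne] at hγpairing
    linarith
  have hγnp : ∀ t : ℚ, γ ≠ t • α := by
    have h := hnp (-(q:ℤ))
    push_cast at h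
    exact h
  have hαnp : ∀ t : ℚ, α ≠ t • γ := by
    intro t h
    by_cases ht : t = 0
    · rw [ht, zero_smul] at h; exact hα0 h
    · apply hγnp t⁻¹
      rw [h, smul_smul, inv_mul_cancel₀ ht, one_smul]
  -- determine pairing α γ = -1 and B γ γ = 3 B α α
  have hγγpos : 0 < B γ γ := hRS.posdef γ hγ0
  obtain ⟨n', hn'⟩ := hRS.cryst γ hγ α hα
  obtain ⟨hge, hlt⟩ := cartan_lt hRS hγ0 hα0 hγnp
  rw [hγpairing, hn'] at hge hlt
  have hBγα : B γ α ≠ 0 := by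
    intro h
    rw [h] at hγα
    simp at hγα
    exact hMne (by linarith)
  have hn'ne : n' ≠ 0 := by
    intro h
    rw [h] at hn'
    unfold pairingB at hn'
    push_cast at hn'
    rw [div_eq_zero_iff] at hn'
    rcases hn' with h' | h'
    · apply hBγα; rw [hRS.symm γ α]; linarith
    · exact hγγpos.ne' h'
  have hn'm1 : n' = -1 := by
    have l1 : (0:ℚ) ≤ -3 * n' := hge
    have l2 : (-3:ℚ) * n' < 4 := hlt
    have l1' : 0 ≤ -3 * n' := by exact_mod_cast l1
    have l2' : -3 * n' < 4 := by exact_mod_cast l2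
    omega
  have hγγ : B γ γ = 3 * B α α := by
    rw [hn'm1] at hn'
    unfold pairingB at hn'
    rw [div_eq_iff hγγpos.ne'] at hn'
    push_cast at hn'
    have hsag := hRS.symm α γ
    linarith [hn', hsag, hγα]
  -- irreducibility: Φ ⊆ span {α, γ}
  have hsub : Φ ⊆ (Submodule.span ℚ ({α, γ} : Set E) : Set E) := by
    intro x hx
    have happ := hirr (Φ ∩ (Submodule.span ℚ ({α, γ} : Set E) : Set E))
      Set.inter_subset_left
      ⟨α, hα, Submodule.subset_span (by simp)⟩
      (by
        rintro ε ⟨hεΦ, hεV⟩ δ hδΦ hδs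
        have hδV : δ ∉ Submodule.span ℚ ({α, γ} : Set E) := fun h => hδs ⟨hδΦ, h⟩
        obtain ⟨e1, e2⟩ := key hRS hα hγ hγγ hγα hδΦ hδV
        obtain ⟨u, v, rfl⟩ := Submodule.mem_span_pair.1 hεV
        have f1 : B α δ = 0 := by rw [hRS.symm α δ]; exact e1
        have f2 : B γ δ = 0 := by rw [hRS.symm γ δ]; exact e2
        simp only [map_add, map_smul, LinearMap.add_apply, LinearMap.smul_apply,
          smul_eq_mul, f1, f2]
        ring)
    exact (happ hx).2
  -- linear independence of α, γ
  have hind : LinearIndependent ℚ ![α, γ] := by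
    rw [LinearIndependent.pair_iff]
    intro s t hst
    have e1 : s * B α α + t * B γ α = 0 := by
      have := congrArg (fun z => B z α) hst
      simpa only [map_add, map_smul, LinearMap.add_apply, LinearMap.smul_apply,
        smul_eq_mul, map_zero, LinearMap.zero_apply] using this
    have e2 : s * B α γ + t * B γ γ = 0 := by
      have := congrArg (fun z => B z γ) hst
      simpa only [map_add, map_smul, LinearMap.add_apply, LinearMap.smul_apply,
        smul_eq_mul, map_zero, LinearMap.zero_apply] using this
    have hsag : B α γ = B γ α := hRS.symm α γ
    rw [hsag] at e2
    -- 2*e1 : 2s M - 3t M = 0 ; 2*e2 : -3 s M + 6 t M = 0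
    have g1 : B α α * (2*s - 3*t) = 0 := by linear_combination 2 * e1 - t * hγα
    have g2 : B α α * (-3*s + 6*t) = 0 := by
      linear_combination 2 * e2 - s * hγα - 2 * t * hγγ
    have g1' : 2*s - 3*t = 0 := by
      rcases mul_eq_zero.mp g1 with h | h
      · exact absurd h hMne
      · exact h
    have g2' : -3*s + 6*t = 0 := by
      rcases mul_eq_zero.mp g2 with h | h
      · exact absurd h hMne
      · exact h
    constructor <;> linarith
  -- span Φ = span {α, γ}
  have hr : Set.range ![α, γ] = ({α, γ} : Set E) := by
    ext z
    simp only [Set.mem_range, Fin.exists_fin_two, Matrix.cons_val_zero, Matrix.cons_val_one,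
      Matrix.head_cons, Set.mem_insert_iff, Set.mem_singleton_iff]
    tauto
  have hspan : Submodule.span ℚ Φ = Submodule.span ℚ (Set.range ![α, γ]) := by
    rw [hr]
    apply le_antisymm
    · rw [Submodule.span_le]; exact hsub
    · apply Submodule.span_mono
      intro z hz
      rcases hz with rfl | hz
      · exact hα
      · rw [Set.mem_singleton_iff] at hz; rw [hz]; exact hγ
  rw [hspan, finrank_span_eq_card hind]
  simp
end
end

section
/- Let α ∈ Φ and let α_i ≠ α_j be two distinct simple roots. Assume α + α_i − α_j ∈ Φ. If α + α_i ∈ Φ and α ≠ α_j, then α − α_j ∈ Φ. -/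
noncomputable section

variable {E : Type*} [AddCommGroup E] [Module ℚ E]

section Aux
variable {E : Type*} [AddCommGroup E] [Module ℚ E]
variable {B : E →ₗ[ℚ] E →ₗ[ℚ] ℚ} {Φ : Set E}

lemma RS.neg_mem (hRS : IsRootSystem B Φ) {α : E} (hα : α ∈ Φ) : -α ∈ Φ := by
  have h0 : (0:ℚ) < B α α := hRS.posdef α (hRS.ne_zero α hα)
  have hp : pairingB B α α = 2 := by unfold pairingB; field_simp
  have h := hRS.reflMem α hα α hα
  rw [hp] at h
  have : α - (2:ℚ) • α = -α := by
    rw [two_smul]; abel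
  rwa [this] at h

lemma RS.cs_lt (hRS : IsRootSystem B Φ) {β γ : E} (hβ : β ∈ Φ) (hγ : γ ∈ Φ)
    (hprop : ∀ c : ℚ, β ≠ c • γ) :
    pairingB B β γ * pairingB B γ β < 4 := by
  have hb : (0:ℚ) < B β β := hRS.posdef β (hRS.ne_zero β hβ)
  have hg : (0:ℚ) < B γ γ := hRS.posdef γ (hRS.ne_zero γ hγ)
  set c : ℚ := B β γ / B γ γ with hc
  have hx0 : β - c • γ ≠ 0 := by
    intro h
    exact hprop c (by rw [sub_eq_zero] at h; exact h)
  have hx := hRS.posdef _ hx0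
  simp only [map_sub, map_smul, LinearMap.sub_apply, LinearMap.smul_apply,
    smul_eq_mul] at hx
  have hsymm : B γ β = B β γ := hRS.symm γ β
  rw [hsymm] at hx
  have key : B β γ * B β γ < B β β * B γ γ := by
    rw [hc] at hx
    have h2 : B β γ / B γ γ * B β γ = B β γ * B β γ / B γ γ := by ring
    field_simp at hx
    nlinarith [hx, hg]
  unfold pairingB
  rw [hsymm, div_mul_div_comm]
  rw [div_lt_iff₀ (by positivity)]
  nlinarith [key, hb, hg]

/-- Key lemma: positive inner product of distinct roots ⇒ difference is a root. -/
lemma RS.sub_mem (hRS : IsRootSystem B Φ) {β γ : E} (hβ : β ∈ Φ) (hγ : γ ∈ Φ)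
    (hpos : 0 < B β γ) (hne : β ≠ γ) : β - γ ∈ Φ := by
  have hb : (0:ℚ) < B β β := hRS.posdef β (hRS.ne_zero β hβ)
  have hg : (0:ℚ) < B γ γ := hRS.posdef γ (hRS.ne_zero γ hγ)
  have hprop : ∀ c : ℚ, β ≠ c • γ := by
    intro c h
    rcases hRS.reduced γ hγ c (h ▸ hβ) with rfl | rfl
    · exact hne (by simpa using h)
    · rw [h] at hpos
      simp only [map_smul, LinearMap.smul_apply, smul_eq_mul] at hpos
      nlinarith [hpos, hg]
  obtain ⟨n, hn⟩ := hRS.cryst γ hγ β hβ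
  obtain ⟨m, hm⟩ := hRS.cryst β hβ γ hγ
  have hn1 : 1 ≤ n := by
    have : (0:ℚ) < (n:ℚ) := by
      rw [← hn]; unfold pairingB; positivity
    exact_mod_cast this
  have hm1 : 1 ≤ m := by
    have : (0:ℚ) < (m:ℚ) := by
      rw [← hm]; unfold pairingB
      rw [hRS.symm γ β]; positivity
    exact_mod_cast this
  have hprod : n * m < 4 := by
    have := RS.cs_lt hRS hβ hγ hprop
    rw [hn, hm] at this
    exact_mod_cast this
  have : n = 1 ∨ m = 1 := by
    by_contra hcon
    push_neg at hcon
    have h2n : 2 ≤ n := by omega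
    have h2m : 2 ≤ m := by omega
    nlinarith [hprod, h2n, h2m]
  rcases this with rfl | rfl
  · have h := hRS.reflMem γ hγ β hβ
    rw [hn] at h
    simpa using h
  · have h := hRS.reflMem β hβ γ hγ
    rw [hm] at h
    simp only [Int.cast_one, one_smul] at h
    have := RS.neg_mem hRS h
    simpa using this

lemma Base.sub_notMem {I : Type*} [Fintype I] (hRS : IsRootSystem B Φ)
    {a : I → E} (hbase : IsBase Φ a) {i j : I} (hij : i ≠ j) :
    a i - a j ∉ Φ := by
  intro hmem
  classical
  have hind := Fintype.linearIndependent_iff.mp hbase.indep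
  rcases hbase.posneg _ hmem with ⟨c, hc⟩ | ⟨c, hc⟩
  · -- a i - a j = ∑ c k • a k
    set g : I → ℚ := fun k => (c k : ℚ) - (if k = i then 1 else 0) + (if k = j then 1 else 0) with hg
    have hsum : ∑ k, g k • a k = 0 := by
      simp only [hg, sub_smul, add_smul, ite_smul, one_smul, zero_smul]
      rw [Finset.sum_add_distrib, Finset.sum_sub_distrib]
      simp [Finset.sum_ite_eq', ← hc]
    have := hind g hsum j
    simp only [hg, if_neg (Ne.symm hij), if_pos rfl] at this
    norm_num at this
    have hnn : (0:ℚ) ≤ (c j : ℚ) := Nat.cast_nonneg _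
    linarith [this, hnn]
  · -- a i - a j = -∑ c k • a k
    set g : I → ℚ := fun k => (c k : ℚ) + (if k = i then 1 else 0) - (if k = j then 1 else 0) with hg
    have hsum : ∑ k, g k • a k = 0 := by
      simp only [hg, sub_smul, add_smul, ite_smul, one_smul, zero_smul]
      rw [Finset.sum_sub_distrib, Finset.sum_add_distrib]
      have : ∑ k, (c k : ℚ) • a k = -(a i - a j) := by rw [← neg_eq_iff_eq_neg]; exact hc.symm
      simp [Finset.sum_ite_eq', this]
    have := hind g hsum i
    simp only [hg, if_pos rfl, if_neg hij] at this
    norm_num at this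
    have hnn : (0:ℚ) ≤ (c i : ℚ) := Nat.cast_nonneg _
    linarith [this, hnn]

lemma Base.B_nonpos {I : Type*} [Fintype I] (hRS : IsRootSystem B Φ)
    {a : I → E} (hbase : IsBase Φ a) {i j : I} (hij : i ≠ j) :
    B (a i) (a j) ≤ 0 := by
  by_contra h
  push_neg at h
  have hne : a i ≠ a j := fun he => hij (hbase.indep.injective he)
  exact Base.sub_notMem hRS hbase hij
    (RS.sub_mem hRS (hbase.mem i) (hbase.mem j) h hne)

end Aux

theorem sub_simple_mem
    {I : Type*} [Fintype I]
    (B : E →ₗ[ℚ] E →ₗ[ℚ] ℚ) (Φ : Set E) (hRS : IsRootSystem B Φ)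
    (a : I → E) (hbase : IsBase Φ a) {i j : I} (hij : i ≠ j)
    {α : E} (hα : α ∈ Φ) (h1 : α + a i - a j ∈ Φ)
    (h2 : α + a i ∈ Φ) (h3 : α ≠ a j) :
    α - a j ∈ Φ := by
  by_cases hs : 0 < B α (a j)
  · exact RS.sub_mem hRS hα (hbase.mem j) hs h3
  push_neg at hs
  by_cases hw : 0 < B (α + a i - a j) (a i)
  · have hδne : α + a i - a j ≠ a i := by
      intro h
      apply h3
      have h0 : α - a j = (α + a i - a j) - a i := by abel
      rw [h, sub_self] at h0
      rwa [sub_eq_zero] at h0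
    have hm := RS.sub_mem hRS h1 (hbase.mem i) hw hδne
    have he : α + a i - a j - a i = α - a j := by abel
    rwa [he] at hm
  · exfalso
    push_neg at hw
    have ht : B (a i) (a j) ≤ 0 := Base.B_nonpos hRS hbase hij
    have hbi : 0 < B (a i) (a i) := hRS.posdef _ (hRS.ne_zero _ (hbase.mem i))
    have hba : 0 < B α α := hRS.posdef _ (hRS.ne_zero _ hα)
    have hw' : B α (a i) + B (a i) (a i) - B (a j) (a i) ≤ 0 := by
      simpa [map_sub, map_add] using hw
    have htsym : B (a j) (a i) = B (a i) (a j) := hRS.symm _ _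
    have hui : B α (a i) ≤ -B (a i) (a i) := by
      rw [htsym] at hw'; linarith
    obtain ⟨n, hn⟩ := hRS.cryst (a i) (hbase.mem i) α hα
    obtain ⟨m, hm⟩ := hRS.cryst α hα (a i) (hbase.mem i)
    have hn2 : (n:ℚ) ≤ -2 := by
      rw [← hn]
      unfold pairingB
      rw [div_le_iff₀ hbi]
      linarith
    have hnI : n ≤ -2 := by exact_mod_cast hn2
    have hmq : (m:ℚ) < 0 := by
      rw [← hm]
      unfold pairingB
      apply div_neg_of_neg_of_pos _ hba
      rw [hRS.symm (a i) α]
      linarith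
    have hmI : m ≤ -1 := by
      have : m < 0 := by exact_mod_cast hmq
      omega
    have hprop : ∀ c : ℚ, α ≠ c • a i := by
      intro c h
      rcases hRS.reduced (a i) (hbase.mem i) c (h ▸ hα) with rfl | rfl
      · rw [one_smul] at h
        rw [h] at hui
        linarith
      · have hzero : α + a i = 0 := by rw [h]; simp
        exact hRS.ne_zero _ h2 hzero
    have hprod := RS.cs_lt hRS hα (hbase.mem i) hprop
    rw [hn, hm] at hprod
    have hprodI : n * m < 4 := by exact_mod_cast hprod
    have hm1 : m = -1 := by nlinarith [hprodI, hnI, hmI]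
    rw [hm1] at hm
    unfold pairingB at hm
    push_cast at hm
    rw [div_eq_iff (ne_of_gt hba)] at hm
    have hv : B α (a i) = -(B α α) / 2 := by
      rw [hRS.symm α (a i)]; linarith
    have hpos : 0 < B α (α + a i - a j) := by
      simp only [map_add, map_sub]
      linarith
    have hαδ : α ≠ α + a i - a j := by
      intro h
      apply hij
      apply hbase.indep.injective
      have hx : α + (a i - a j) = α := by rw [← add_sub_assoc]; exact h.symm
      have h0 : a i - a j = 0 := by
        have := hx
        rwa [add_eq_left] at this
      rwa [sub_eq_zero] at h0
    have hsub := RS.sub_mem hRS hα h1 hpos hαδ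
    have he : α - (α + a i - a j) = a j - a i := by abel
    rw [he] at hsub
    exact Base.sub_notMem hRS hbase hij.symm hsub
end
end

section
/- Let α ∈ Φ and let α_i ≠ α_j be two distinct simple roots. Assume α + α_i − α_j ∈ Φ. If α − α_j ∈ Φ and α ≠ −α_i, then α + α_i ∈ Φ. -/
noncomputable section

variable {E : Type*} [AddCommGroup E] [Module ℚ E]

lemma my_schwarz (B : E →ₗ[ℚ] E →ₗ[ℚ] ℚ)
    (hsymm : ∀ x y : E, B x y = B y x) (hpos : ∀ x : E, x ≠ 0 → 0 < B x x)
    {β δ : E} (hδ : δ ≠ 0) (hind : ∀ t : ℚ, β ≠ t • δ) :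
    B β δ * B β δ < B β β * B δ δ := by
  have hz : 0 < B δ δ := hpos δ hδ
  set t : ℚ := B β δ / B δ δ with ht
  have hne : β - t • δ ≠ 0 := by
    intro h
    exact hind t (by rw [sub_eq_zero] at h; exact h)
  have h := hpos _ hne
  have hexp : B (β - t • δ) (β - t • δ)
      = B β β - 2 * t * B β δ + t * t * B δ δ := by
    simp only [map_sub, map_smul, LinearMap.sub_apply, LinearMap.smul_apply,
      smul_eq_mul, hsymm δ β]
    ring
  rw [hexp] at h
  have h2 : t * B δ δ = B β δ := by rw [ht]; field_simp [hz.ne']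
  nlinarith [h, h2]

lemma my_neg_mem {B : E →ₗ[ℚ] E →ₗ[ℚ] ℚ} {Φ : Set E} (hRS : IsRootSystem B Φ)
    {δ : E} (hδ : δ ∈ Φ) : -δ ∈ Φ := by
  have h := hRS.reflMem δ hδ δ hδ
  have hp : pairingB B δ δ = 2 := by
    have := hRS.posdef δ (hRS.ne_zero δ hδ)
    unfold pairingB
    field_simp
  rw [hp] at h
  have : δ - (2:ℚ) • δ = -δ := by
    rw [two_smul]; abel
  rwa [this] at h

/-- If β, δ are roots with B β δ < 0 and β + δ ≠ 0 then β + δ is a root. -/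
lemma my_sum_mem {B : E →ₗ[ℚ] E →ₗ[ℚ] ℚ} {Φ : Set E} (hRS : IsRootSystem B Φ)
    {β δ : E} (hβ : β ∈ Φ) (hδ : δ ∈ Φ) (hneg : B β δ < 0) (hne : β + δ ≠ 0) :
    β + δ ∈ Φ := by
  have hβ0 := hRS.ne_zero β hβ
  have hδ0 := hRS.ne_zero δ hδ
  have hx : 0 < B β β := hRS.posdef β hβ0
  have hz : 0 < B δ δ := hRS.posdef δ hδ0
  have hβδ : β ≠ δ := by
    intro h; rw [h] at hneg; exact absurd hneg (not_lt.2 hz.le)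
  have hind : ∀ t : ℚ, β ≠ t • δ := by
    intro t h
    have ht := hRS.reduced δ hδ t (h ▸ hβ)
    rcases ht with ht | ht
    · rw [ht, one_smul] at h; exact hβδ h
    · rw [ht, neg_smul, one_smul] at h
      apply hne; rw [h]; abel
  have hcs := my_schwarz B hRS.symm hRS.posdef hδ0 hind
  obtain ⟨m, hm⟩ := hRS.cryst δ hδ β hβ
  obtain ⟨n, hn⟩ := hRS.cryst β hβ δ hδ
  -- pairingB B β δ = m, pairingB B δ β = n
  have hpq : pairingB B β δ * pairingB B δ β < 4 := by
    unfold pairingB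
    rw [hRS.symm δ β]
    rw [div_mul_div_comm]
    rw [div_lt_iff₀ (by positivity)]
    nlinarith [hcs]
  have hm_neg : pairingB B β δ < 0 := by
    unfold pairingB
    apply div_neg_of_neg_of_pos _ hz
    linarith
  have hn_neg : pairingB B δ β < 0 := by
    unfold pairingB
    apply div_neg_of_neg_of_pos _ hx
    rw [hRS.symm δ β]; linarith
  have hm1 : m ≤ -1 := by
    have h' : (m:ℚ) < 0 := hm ▸ hm_neg
    have : m < 0 := by exact_mod_cast h'
    omega
  have hn1 : n ≤ -1 := by
    have h' : (n:ℚ) < 0 := hn ▸ hn_neg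
    have : n < 0 := by exact_mod_cast h'
    omega
  have hor : pairingB B β δ = -1 ∨ pairingB B δ β = -1 := by
    by_contra hc
    push_neg at hc
    have hm2 : m ≤ -2 := by
      have : (m:ℚ) ≠ -1 := hm ▸ hc.1
      have : m ≠ -1 := by exact_mod_cast this
      omega
    have hn2 : n ≤ -2 := by
      have : (n:ℚ) ≠ -1 := hn ▸ hc.2
      have : n ≠ -1 := by exact_mod_cast this
      omega
    have hmq : (m:ℚ) ≤ -2 := by exact_mod_cast hm2
    have hnq : (n:ℚ) ≤ -2 := by exact_mod_cast hn2
    rw [hm, hn] at hpq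
    nlinarith [hpq, hmq, hnq]
  rcases hor with h | h
  · have := hRS.reflMem δ hδ β hβ
    rw [h] at this
    have he : β - (-1 : ℚ) • δ = β + δ := by
      rw [neg_smul, one_smul]; abel
    rwa [he] at this
  · have := hRS.reflMem β hβ δ hδ
    rw [h] at this
    have he : δ - (-1 : ℚ) • β = β + δ := by
      rw [neg_smul, one_smul]; abel
    rwa [he] at this

/-- If β, δ are roots with B β δ > 0 and β ≠ δ then β - δ is a root. -/
lemma my_diff_mem {B : E →ₗ[ℚ] E →ₗ[ℚ] ℚ} {Φ : Set E} (hRS : IsRootSystem B Φ)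
    {β δ : E} (hβ : β ∈ Φ) (hδ : δ ∈ Φ) (hpos : 0 < B β δ) (hne : β ≠ δ) :
    β - δ ∈ Φ := by
  have h := my_sum_mem hRS hβ (my_neg_mem hRS hδ)
    (by simp only [map_neg]; linarith)
    (by rw [← sub_eq_add_neg]; exact sub_ne_zero.2 hne)
  rwa [← sub_eq_add_neg] at h

open Classical in
lemma my_diff_ne {I : Type*} [Fintype I] {a : I → E}
    (hind : LinearIndependent ℚ a) {i j : I} (hij : i ≠ j) (c : I → ℕ) :
    a i - a j ≠ ∑ k, (c k : ℚ) • a k := by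
  intro hc
  set g : I → ℚ := fun k =>
    (if k = i then (1:ℚ) else 0) - (if k = j then (1:ℚ) else 0) - c k with hg
  have hsum : ∑ k, g k • a k = 0 := by
    simp only [hg, sub_smul, ite_smul, one_smul, zero_smul,
      Finset.sum_sub_distrib, Finset.sum_ite_eq', Finset.mem_univ, if_true]
    rw [← hc]; abel
  have hj := Fintype.linearIndependent_iff.1 hind g hsum j
  simp only [hg, if_neg (Ne.symm hij), if_pos rfl] at hj
  norm_num at hj
  have : (0:ℚ) ≤ (c j : ℚ) := Nat.cast_nonneg _
  linarith

lemma my_simple_diff_not_mem {I : Type*} [Fintype I] {Φ : Set E} {a : I → E}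
    (hbase : IsBase Φ a) {i j : I} (hij : i ≠ j) : a i - a j ∉ Φ := by
  intro hmem
  rcases hbase.posneg _ hmem with ⟨c, hc⟩ | ⟨c, hc⟩
  · exact my_diff_ne hbase.indep hij c hc
  · apply my_diff_ne hbase.indep hij.symm c
    rw [show a j - a i = -(a i - a j) by abel, hc, neg_neg]

lemma my_simple_B_nonpos {I : Type*} [Fintype I]
    {B : E →ₗ[ℚ] E →ₗ[ℚ] ℚ} {Φ : Set E} (hRS : IsRootSystem B Φ)
    {a : I → E} (hbase : IsBase Φ a) {i j : I} (hij : i ≠ j) :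
    B (a i) (a j) ≤ 0 := by
  by_contra h
  push_neg at h
  have hne : a i ≠ a j := fun he => hij (hbase.indep.injective he)
  exact my_simple_diff_not_mem hbase hij
    (my_diff_mem hRS (hbase.mem i) (hbase.mem j) h hne)

theorem add_simple_mem
    {I : Type*} [Fintype I]
    (B : E →ₗ[ℚ] E →ₗ[ℚ] ℚ) (Φ : Set E) (hRS : IsRootSystem B Φ)
    (a : I → E) (hbase : IsBase Φ a) {i j : I} (hij : i ≠ j)
    {α : E} (hα : α ∈ Φ) (h1 : α + a i - a j ∈ Φ)
    (h2 : α - a j ∈ Φ) (h3 : α ≠ -a i) :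
    α + a i ∈ Φ := by
  by_contra hne
  have hai := hbase.mem i
  have haj := hbase.mem j
  have hα0 := hRS.ne_zero α hα
  have hx : 0 < B α α := hRS.posdef α hα0
  have hzj : 0 < B (a j) (a j) := hRS.posdef _ (hRS.ne_zero _ haj)
  have hsum0 : α + a i ≠ 0 := by
    intro h; exact h3 (eq_neg_of_add_eq_zero_left h)
  -- B α (a i) ≥ 0
  have hBαi : 0 ≤ B α (a i) := by
    by_contra h; push_neg at h
    exact hne (my_sum_mem hRS hα hai h hsum0)
  -- B (α + a i - a j) (a j) ≥ 0
  have hBγj : 0 ≤ B (α + a i - a j) (a j) := by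
    by_contra h; push_neg at h
    have hne0 : (α + a i - a j) + a j ≠ 0 := by
      rw [show (α + a i - a j) + a j = α + a i by abel]; exact hsum0
    have hkey := my_sum_mem hRS h1 haj h hne0
    rw [show (α + a i - a j) + a j = α + a i by abel] at hkey
    exact hne hkey
  have hijB : B (a i) (a j) ≤ 0 := my_simple_B_nonpos hRS hbase hij
  have hBγj' : 0 ≤ B α (a j) + B (a i) (a j) - B (a j) (a j) := by
    simpa only [map_add, map_sub, LinearMap.add_apply, LinearMap.sub_apply]
      using hBγj
  have hBαj : B (a j) (a j) ≤ B α (a j) := by linarith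
  -- α is not a multiple of a j
  have hααj : α ≠ a j := by
    intro h
    exact hRS.ne_zero _ h2 (by rw [h, sub_self])
  have hind' : ∀ t : ℚ, α ≠ t • a j := by
    intro t h
    rcases hRS.reduced _ haj t (h ▸ hα) with ht | ht
    · rw [ht, one_smul] at h; exact hααj h
    · rw [ht, neg_smul, one_smul] at h
      have : B α (a j) = -B (a j) (a j) := by
        rw [h]; simp [hRS.symm]
      linarith
  have hcs := my_schwarz B hRS.symm hRS.posdef (hRS.ne_zero _ haj) hind'
  -- the integer ⟨a j, α^∨⟩ equals 1
  obtain ⟨n, hn⟩ := hRS.cryst α hα (a j) haj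
  have hn' : 2 * B α (a j) = (n : ℚ) * B α α := by
    unfold pairingB at hn
    rw [hRS.symm (a j) α] at hn
    field_simp at hn
    linarith [hn]
  have hnq : (0:ℚ) < (n:ℚ) := by nlinarith [hx, hBαj, hzj, hn']
  have hn1 : n = 1 := by
    have h0 : 0 < n := by exact_mod_cast hnq
    by_contra hc
    have h2n : 2 ≤ n := by omega
    have h2q : (2:ℚ) ≤ (n:ℚ) := by exact_mod_cast h2n
    nlinarith [hcs, hBαj, hn', hx, hzj]
  have h2B : 2 * B α (a j) = B α α := by
    rw [hn1] at hn'; simpa using hn'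
  -- B (α + a i - a j) α > 0
  have hBγα : 0 < B (α + a i - a j) α := by
    simp only [map_add, map_sub, LinearMap.add_apply, LinearMap.sub_apply,
      hRS.symm (a i) α, hRS.symm (a j) α]
    linarith
  have haij : a i ≠ a j := fun he => hij (hbase.indep.injective he)
  have hγα : α + a i - a j ≠ α := by
    intro h
    apply haij
    have h' : a i - a j = 0 := by
      have : a i - a j = (α + a i - a j) - α := by abel
      rw [this, h, sub_self]
    exact sub_eq_zero.1 h'
  have hdiff := my_diff_mem hRS h1 hα hBγα hγα
  rw [show (α + a i - a j) - α = a i - a j by abel] at hdiff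
  exact my_simple_diff_not_mem hbase hij hdiff
end
end

section
/- Let α ∈ Φ and let α_i ≠ α_j be distinct simple roots such that α + α_i ∈ Φ, α − α_j ∈ Φ, and α + α_i − α_j ∈ Φ. Then m_i^−(α − α_j) · m_j^+(α) = m_j^+(α + α_i) · m_i^−(α), where for a root β ≠ ±γ with γ-string β − qγ, ..., β + pγ through β one sets m_γ^+(β) = p + 1 and m_γ^−(β) = q + 1. -/
set_option maxHeartbeats 1000000


noncomputable section

variable {E : Type*} [AddCommGroup E] [Module ℚ E]

namespace RSAux

variable {B : E →ₗ[ℚ] E →ₗ[ℚ] ℚ} {Φ : Set E}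

lemma norm_pos (hRS : IsRootSystem B Φ) {x : E} (hx : x ∈ Φ) : 0 < B x x :=
  hRS.posdef x (hRS.ne_zero x hx)

lemma pair_mul_norm (hRS : IsRootSystem B Φ) {y : E} (hy : y ∈ Φ) (x : E) :
    pairingB B x y * B y y = 2 * B x y := by
  have h := (norm_pos hRS hy).ne'
  rw [pairingB, div_mul_cancel₀ _ h]

lemma neg_mem (hRS : IsRootSystem B Φ) {x : E} (hx : x ∈ Φ) : -x ∈ Φ := by
  have h := hRS.reflMem x hx x hx
  have hxx := (norm_pos hRS hx).ne'
  have : pairingB B x x = 2 := by rw [pairingB]; field_simp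
  rw [this] at h
  have : x - (2:ℚ) • x = -x := by
    rw [two_smul]; abel
  rwa [this] at h

/-- strict Cauchy-Schwarz for non-proportional roots -/
lemma cs_strict (hRS : IsRootSystem B Φ) {x y : E} (hx : x ∈ Φ) (hy : y ∈ Φ)
    (h1 : x ≠ y) (h2 : x ≠ -y) : (B x y) ^ 2 < B x x * B y y := by
  have hyy := norm_pos hRS hy
  have hz : B y y • x - B x y • y ≠ 0 := by
    intro h
    have hxe : x = (B x y / B y y) • y := by
      have : B y y • x = B x y • y := by
        rw [sub_eq_zero] at h; exact h
      rw [div_eq_mul_inv, mul_comm, mul_smul]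
      rw [← this, ← mul_smul, inv_mul_cancel₀ hyy.ne', one_smul]
    rcases hRS.reduced y hy _ (hxe ▸ hx) with h' | h'
    · exact h1 (by rw [hxe, h', one_smul])
    · exact h2 (by rw [hxe, h', neg_one_smul])
  have hpos := hRS.posdef _ hz
  have hexp : B (B y y • x - B x y • y) (B y y • x - B x y • y)
      = B y y * (B x x * B y y - B x y ^ 2) := by
    have hs := hRS.symm x y
    simp [map_sub, map_smul, smul_eq_mul]
    ring_nf
    rw [hs]
    ring
  rw [hexp] at hpos
  nlinarith

lemma pair_int (hRS : IsRootSystem B Φ) {x y : E} (hx : x ∈ Φ) (hy : y ∈ Φ) :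
    ∃ n : ℤ, 2 * B x y = (n : ℚ) * B y y := by
  obtain ⟨n, hn⟩ := hRS.cryst y hy x hx
  exact ⟨n, by rw [← hn, ← pair_mul_norm hRS hy x]⟩

/-- the two Cartan integers have product in [0,3] -/
lemma pair_ints (hRS : IsRootSystem B Φ) {x y : E} (hx : x ∈ Φ) (hy : y ∈ Φ)
    (h1 : x ≠ y) (h2 : x ≠ -y) :
    ∃ n m : ℤ, 2 * B x y = (n : ℚ) * B y y ∧ 2 * B x y = (m : ℚ) * B x x ∧
      0 ≤ n * m ∧ n * m ≤ 3 := by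
  obtain ⟨n, hn⟩ := pair_int hRS hx hy
  obtain ⟨m, hm⟩ := pair_int hRS hy hx
  rw [hRS.symm y x] at hm
  have hxx := norm_pos hRS hx
  have hyy := norm_pos hRS hy
  have hcs := cs_strict hRS hx hy h1 h2
  have key : ((n:ℚ)) * (m:ℚ) * (B y y * B x x) = 4 * (B x y)^2 := by
    linear_combination (-2*B x y)*hn + (-(n:ℚ)*B y y)*hm
  have hP := mul_pos hyy hxx
  refine ⟨n, m, hn, hm, ?_, ?_⟩
  · have : (0:ℚ) ≤ (n:ℚ) * (m:ℚ) := by nlinarith [sq_nonneg (B x y)]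
    exact_mod_cast this
  · have : ((n:ℚ)) * (m:ℚ) < 4 := by nlinarith
    have : ((n*m : ℤ):ℚ) < 4 := by push_cast; linarith
    exact_mod_cast Int.lt_add_one_iff.mp (by exact_mod_cast this)

/-- Cartan integer bound: -3 B y y ≤ 2 B x y ≤ 3 B y y -/
lemma pair_bounds (hRS : IsRootSystem B Φ) {x y : E} (hx : x ∈ Φ) (hy : y ∈ Φ)
    (h1 : x ≠ y) (h2 : x ≠ -y) :
    -(3 * B y y) ≤ 2 * B x y ∧ 2 * B x y ≤ 3 * B y y := by
  obtain ⟨n, m, hn, hm, hnm0, hnm3⟩ := pair_ints hRS hx hy h1 h2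
  have hxx := norm_pos hRS hx
  have hyy := norm_pos hRS hy
  have habs : -3 ≤ n ∧ n ≤ 3 := by
    rcases eq_or_ne n 0 with h | h
    · omega
    · have hm0 : m ≠ 0 := by
        intro hm0
        rw [hm0] at hm
        have hbxy : B x y = 0 := by push_cast at hm; linarith
        rw [hbxy] at hn
        have : (n:ℚ) * B y y = 0 := by linarith
        rcases mul_eq_zero.mp this with h' | h'
        · exact h (by exact_mod_cast h')
        · exact absurd h' hyy.ne'
      have hm' : m ≤ -1 ∨ 1 ≤ m := by omega
      constructor
      · by_contra h'
        push_neg at h'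
        have hn4 : n ≤ -4 := by omega
        rcases hm' with h'' | h'' <;> nlinarith
      · by_contra h'
        push_neg at h'
        have hn4 : 4 ≤ n := by omega
        rcases hm' with h'' | h'' <;> nlinarith
  constructor
  · have : ((-3 : ℤ) : ℚ) * B y y ≤ (n:ℚ) * B y y := by
      have : ((-3:ℤ):ℚ) ≤ (n:ℚ) := by exact_mod_cast habs.1
      nlinarith
    push_cast at this; linarith [hn]
  · have : (n:ℚ) * B y y ≤ ((3 : ℤ) : ℚ) * B y y := by
      have : (n:ℚ) ≤ ((3:ℤ):ℚ) := by exact_mod_cast habs.2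
      nlinarith
    push_cast at this; linarith [hn]

/-- F3: positive inner product of non-proportional roots implies difference is a root -/
lemma sub_mem (hRS : IsRootSystem B Φ) {x y : E} (hx : x ∈ Φ) (hy : y ∈ Φ)
    (h1 : x ≠ y) (h2 : x ≠ -y) (hpos : 0 < B x y) : x - y ∈ Φ := by
  obtain ⟨n, m, hn, hm, hnm0, hnm3⟩ := pair_ints hRS hx hy h1 h2
  have hxx := norm_pos hRS hx
  have hyy := norm_pos hRS hy
  have hn1 : 1 ≤ n := by
    have : (0:ℚ) < (n:ℚ) * B y y := by rw [← hn]; linarith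
    have : (0:ℚ) < (n:ℚ) := by nlinarith
    exact_mod_cast this
  have hm1 : 1 ≤ m := by
    have : (0:ℚ) < (m:ℚ) * B x x := by rw [← hm]; linarith
    have : (0:ℚ) < (m:ℚ) := by nlinarith
    exact_mod_cast this
  have : n = 1 ∨ m = 1 := by
    by_contra hcon
    push_neg at hcon
    have : 2 ≤ n := by omega
    have : 2 ≤ m := by omega
    nlinarith
  rcases this with h | h
  · have hp : pairingB B x y = 1 := by
      have h' := pair_mul_norm hRS hy x
      rw [hn, h] at h'
      push_cast at h'
      have h'' : pairingB B x y * B y y = 1 * B y y := by linarith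
      exact mul_right_cancel₀ hyy.ne' h''
    have := hRS.reflMem y hy x hx
    rw [hp, one_smul] at this
    exact this
  · have hp : pairingB B y x = 1 := by
      have h' := pair_mul_norm hRS hx y
      rw [hRS.symm y x, hm, h] at h'
      push_cast at h'
      have h'' : pairingB B y x * B x x = 1 * B x x := by linarith
      exact mul_right_cancel₀ hxx.ne' h''
    have hyx := hRS.reflMem x hx y hy
    rw [hp, one_smul] at hyx
    have := neg_mem hRS hyx
    have he : -(y - x) = x - y := by abel
    rwa [he] at this

lemma sum_mem (hRS : IsRootSystem B Φ) {x y : E} (hx : x ∈ Φ) (hy : y ∈ Φ)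
    (h1 : x ≠ y) (h2 : x ≠ -y) (hneg : B x y < 0) : x + y ∈ Φ := by
  have hy' := neg_mem hRS hy
  have h1' : x ≠ -y := h2
  have h2' : x ≠ -(-y) := by rwa [neg_neg]
  have hpos : 0 < B x (-y) := by
    have : B x (-y) = - B x y := by simp
    rw [this]; linarith
  have := sub_mem hRS hx hy' h1' h2' hpos
  have he : x - -y = x + y := by abel
  rwa [he] at this

/-- roots x, y with x+y a root satisfy ⟨x,y∨⟩ ≤ 1 -/
lemma pair_le_one (hRS : IsRootSystem B Φ) {x y : E} (hx : x ∈ Φ) (hy : y ∈ Φ)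
    (hxy : x + y ∈ Φ) : 2 * B x y ≤ B y y := by
  have h1 : x ≠ y := by
    intro h
    rw [h] at hxy
    have : (2:ℚ) • y ∈ Φ := by rw [two_smul]; exact hxy
    rcases hRS.reduced y hy 2 this with h' | h' <;> norm_num at h'
  have h2 : x ≠ -y := by
    intro h
    rw [h] at hxy
    have : (-y) + y = 0 := by abel
    rw [this] at hxy
    exact hRS.ne_zero 0 hxy rfl
  have h3 : x + y ≠ y := by
    intro h
    have hx0 : x = 0 := by
      have := congrArg (fun z => z - y) h
      simpa using this
    exact hRS.ne_zero x hx hx0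
  have h4 : x + y ≠ -y := by
    intro h
    have he : x = (-2 : ℚ) • y := by
      have e : (-2 : ℚ) • y = -y - y := by rw [neg_smul, two_smul]; abel
      rw [e, ← h]; abel
    rw [he] at hx
    rcases hRS.reduced y hy _ hx with h' | h' <;> norm_num at h'
  have := (pair_bounds hRS hxy hy h3 h4).2
  have hexp : B (x + y) y = B x y + B y y := by simp [map_add]
  rw [hexp] at this
  linarith

lemma pair_ge_negone (hRS : IsRootSystem B Φ) {x y : E} (hx : x ∈ Φ) (hy : y ∈ Φ)
    (hxy : x - y ∈ Φ) : -(B y y) ≤ 2 * B x y := by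
  have hy' := neg_mem hRS hy
  have hxy' : x + -y ∈ Φ := by
    have : x + -y = x - y := by abel
    rwa [this]
  have := pair_le_one hRS hx hy' hxy'
  have e1 : B x (-y) = - B x y := by simp
  have e2 : B (-y) (-y) = B y y := by simp
  rw [e1, e2] at this
  linarith

/-- rectangle lemma for orthogonal x,y whose difference is not a root -/
lemma rect (hRS : IsRootSystem B Φ) {x y β : E} (hx : x ∈ Φ) (hy : y ∈ Φ)
    (hxy : B x y = 0) (hd1 : x - y ∉ Φ) (hd2 : y - x ∉ Φ)
    (hβ : β ∈ Φ) (hβx : β - x ∈ Φ) (hβy : β - y ∈ Φ) (hne : β ≠ x + y) :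
    β - x - y ∈ Φ := by
  have hxx := norm_pos hRS hx
  have hyy := norm_pos hRS hy
  have hxny : x ≠ y := by
    intro h; rw [h] at hxy; exact hyy.ne' hxy
  by_cases hby : 0 < B β y
  · -- F3 on (β - x, y)
    have hne1 : β - x ≠ y := by
      intro h; exact hne (by rw [← h]; abel)
    have hne2 : β - x ≠ -y := by
      intro h
      have hb : β = x - y := by rw [sub_eq_iff_eq_add] at h; rw [h]; abel
      rw [hb] at hby
      have : B (x - y) y = - B y y := by simp [map_sub, hxy]
      rw [this] at hby; linarith
    have hpos : 0 < B (β - x) y := by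
      have : B (β - x) y = B β y - B x y := by simp [map_sub]
      rw [this, hxy]; linarith
    have := sub_mem hRS hβx hy hne1 hne2 hpos
    have he : β - x - y = β - x - y := rfl
    exact this
  by_cases hbx : 0 < B β x
  · have hne1 : β - y ≠ x := by
      intro h; exact hne (by rw [← h]; abel)
    have hyx0 : B y x = 0 := by rw [← hRS.symm x y]; exact hxy
    have hne2 : β - y ≠ -x := by
      intro h
      have hb : β = y - x := by rw [sub_eq_iff_eq_add] at h; rw [h]; abel
      rw [hb] at hbx
      have : B (y - x) x = - B x x := by simp [map_sub, hyx0]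
      rw [this] at hbx; linarith
    have hpos : 0 < B (β - y) x := by
      have : B (β - y) x = B β x - B y x := by simp [map_sub]
      rw [this, hyx0]; linarith
    have := sub_mem hRS hβy hx hne1 hne2 hpos
    have he : β - y - x = β - x - y := by abel
    rwa [he] at this
  · push_neg at hby hbx
    exfalso
    have hβpos := norm_pos hRS hβ
    have hyx0 : B y x = 0 := by rw [← hRS.symm x y]; exact hxy
    have hne1 : β - x ≠ β - y := by
      intro h
      apply hxny
      calc x = β - (β - x) := by abel
      _ = β - (β - y) := by rw [h]
      _ = y := by abel
    have hne2 : β - x ≠ -(β - y) := by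
      intro h
      have h' : β - x = y - β := by rw [h]; abel
      have e0 : β + β - (x + y) = (β - x) - (y - β) := by abel
      rw [h', sub_self] at e0
      have h2β : β + β = x + y := by
        have := sub_eq_zero.mp e0
        exact this
      have : 0 < B β x := by
        have e : B (β + β) x = B (x + y) x := by rw [h2β]
        simp only [map_add, LinearMap.add_apply] at e
        rw [hyx0] at e
        linarith
      linarith
    have hpos : 0 < B (β - x) (β - y) := by
      have e : B (β - x) (β - y) = B β β - B β y - B β x + B x y := by
        simp [map_sub]
        rw [hRS.symm x β]
        ring
      rw [e, hxy]
      linarith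
    have := sub_mem hRS hβx hβy hne1 hne2 hpos
    have he : β - x - (β - y) = y - x := by abel
    rw [he] at this
    exact hd2 this

/-- no Cartan integer strictly between k and k+1 -/
lemma pair_not_btwn (hRS : IsRootSystem B Φ) {X Y : E} (hX : X ∈ Φ) (hY : Y ∈ Φ)
    (k : ℤ) (hlo : (k:ℚ) * B Y Y < 2 * B X Y)
    (hhi : 2 * B X Y < ((k:ℚ) + 1) * B Y Y) : False := by
  obtain ⟨n, hn⟩ := pair_int hRS hX hY
  have hYY := norm_pos hRS hY
  rw [hn] at hlo hhi
  have l1 : (k:ℚ) < (n:ℚ) := (mul_lt_mul_iff_of_pos_right hYY).mp hlo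
  have l2 : (n:ℚ) < (k:ℚ) + 1 := by
    have := (mul_lt_mul_iff_of_pos_right hYY).mp hhi
    linarith
  have d1 : k < n := by exact_mod_cast l1
  have d2 : (n:ℚ) < ((k+1 : ℤ):ℚ) := by push_cast; linarith
  have d2' : n < k + 1 := by exact_mod_cast d2
  omega

section Fam
variable {u v α : E}

/-- In the (-1,-1) configuration, ⟨α,u∨⟩ + ⟨α,v∨⟩ ≤ 0. -/
lemma famI (hRS : IsRootSystem B Φ) (hu : u ∈ Φ) (hv : v ∈ Φ) (hα : α ∈ Φ)
    (h1 : α + u ∈ Φ) (h2 : α - v ∈ Φ) (h3 : α + u - v ∈ Φ) (huv : u + v ∈ Φ)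
    (hc : 2 * B v u = -(B u u)) (hd : 2 * B u v = -(B v v)) :
    B α u + B α v ≤ 0 := by
  have hS : 0 < B u u := norm_pos hRS hu
  have hM : 0 < B α α := norm_pos hRS hα
  have suv : B v u = B u v := hRS.symm v u
  have sαu : B u α = B α u := hRS.symm u α
  have sαv : B v α = B α v := hRS.symm v α
  have hBuv : 2 * B u v = -(B u u) := by rw [← suv]; exact hc
  have hvvS : B v v = B u u := by linarith
  obtain ⟨A, hA⟩ := pair_int hRS hα hu
  obtain ⟨Bq, hB0⟩ := pair_int hRS hα hv
  have hB : 2 * B α v = (Bq:ℚ) * B u u := by rw [hvvS] at hB0; exact hB0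
  have hα1 : α ≠ u := by
    intro h; rw [h] at h1
    have : (2:ℚ) • u ∈ Φ := by rw [two_smul]; exact h1
    rcases hRS.reduced u hu 2 this with h' | h' <;> norm_num at h'
  have hα2 : α ≠ -u := by
    intro h; rw [h] at h1
    have : -u + u = 0 := by abel
    rw [this] at h1; exact hRS.ne_zero 0 h1 rfl
  have hα3 : α ≠ v := by
    intro h; rw [h] at h2
    rw [sub_self] at h2; exact hRS.ne_zero 0 h2 rfl
  have hα4 : α ≠ -v := by
    intro h; rw [h] at h2
    have : -v - v = (-2:ℚ) • v := by rw [neg_smul, two_smul]; abel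
    rw [this] at h2
    rcases hRS.reduced v hv _ h2 with h' | h' <;> norm_num at h'
  have h3' : (α - v) + u ∈ Φ := by
    have : (α - v) + u = α + u - v := by abel
    rwa [this]
  have h3'' : (α + u) - v ∈ Φ := h3
  have huv1 : (α - v) + (u + v) ∈ Φ := by
    have : (α - v) + (u + v) = α + u := by abel
    rwa [this]
  have bA3 : -3 ≤ A := by
    have hb := (pair_bounds hRS hα hu hα1 hα2).1
    rw [hA] at hb
    have : (-3:ℚ) ≤ (A:ℚ) := by nlinarith
    exact_mod_cast this
  have bB3 : Bq ≤ 3 := by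
    have hb := (pair_bounds hRS hα hv hα3 hα4).2
    rw [hB0] at hb
    have hvv : 0 < B v v := norm_pos hRS hv
    have : (Bq:ℚ) ≤ 3 := by nlinarith
    exact_mod_cast this
  have bA0 : A ≤ 0 := by
    have hb := pair_le_one hRS h2 hu h3'
    have e : 2 * B (α - v) u = (A:ℚ) * B u u + B u u := by
      simp only [map_sub, LinearMap.sub_apply]
      linear_combination hA - hc
    rw [e] at hb
    have : (A:ℚ) ≤ 0 := by nlinarith
    exact_mod_cast this
  have bB0 : 0 ≤ Bq := by
    have hb := pair_ge_negone hRS h1 hv h3''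
    have e : 2 * B (α + u) v = (Bq:ℚ) * B u u - B u u := by
      simp only [map_add, LinearMap.add_apply]
      linear_combination hB + hBuv
    rw [e, hvvS] at hb
    have : (0:ℚ) ≤ (Bq:ℚ) := by nlinarith
    exact_mod_cast this
  have bAB : A + Bq ≤ 2 := by
    have hb := pair_le_one hRS h2 huv huv1
    have eL : 2 * B (α - v) (u + v) = ((A:ℚ) + (Bq:ℚ) - 1) * B u u := by
      simp only [map_sub, map_add, LinearMap.sub_apply, LinearMap.add_apply]
      linear_combination hA + hB - hc - 2 * hvvS
    have eR : B (u + v) (u + v) = B u u := by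
      simp only [map_add, LinearMap.add_apply]
      linear_combination suv + hBuv + hvvS
    rw [eL, eR] at hb
    have : (A:ℚ) + (Bq:ℚ) ≤ 2 := by nlinarith
    exact_mod_cast this
  by_contra hcon
  push_neg at hcon
  have hn1 : 1 ≤ A + Bq := by
    have h0 : (0:ℚ) < ((A:ℚ) + (Bq:ℚ)) * B u u := by nlinarith
    have : (0:ℚ) < (A:ℚ) + (Bq:ℚ) := by nlinarith
    have : 0 < A + Bq := by exact_mod_cast this
    omega
  -- remaining cases: (A,Bq) ∈ {(0,1),(0,2),(-1,2),(-1,3),(-2,3)}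
  have hav : 0 < B (α - v) (α - v) := norm_pos hRS h2
  have eav : 2 * B (α - v) (α - v) = 2 * B α α - 2 * ((Bq:ℚ) * B u u) + 2 * B u u := by
    simp only [map_sub, LinearMap.sub_apply, sαv]
    linear_combination (-2) * hB + 2 * hvvS
  have hcases : (A = 0 ∧ Bq = 1) ∨ (A = 0 ∧ Bq = 2) ∨ (A = -1 ∧ Bq = 2) ∨
      (A = -1 ∧ Bq = 3) ∨ (A = -2 ∧ Bq = 3) := by omega
  have e2XY : 2 * B α (α + u) = 2 * B α α + (A:ℚ) * B u u := by
    simp only [map_add]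
    linear_combination hA
  have e2YY : B (α + u) (α + u) = B α α + (A:ℚ) * B u u + B u u := by
    simp only [map_add, LinearMap.add_apply, sαu]
    linear_combination hA
  rcases hcases with ⟨rfl, rfl⟩ | ⟨rfl, rfl⟩ | ⟨rfl, rfl⟩ | ⟨rfl, rfl⟩ | ⟨rfl, rfl⟩
  · -- (0,1) : X = α+u, Y = α+u-v, pairing in (1,2)
    refine pair_not_btwn hRS h1 h3 1 ?_ ?_ <;>
    · have e1 : 2 * B (α + u) (α + u - v) = 2 * B α α + 2 * B u u := by
        simp only [map_add, map_sub, LinearMap.add_apply, LinearMap.sub_apply, sαu, sαv, suv]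
        push_cast at hA hB
        linear_combination 2 * hA - hB - hBuv
      have e2 : B (α + u - v) (α + u - v) = B α α + 2 * B u u := by
        simp only [map_add, map_sub, LinearMap.add_apply, LinearMap.sub_apply, sαu, sαv, suv]
        push_cast at hA hB
        linear_combination hA - hB - hBuv + hvvS
      rw [e1, e2]
      push_cast
      linarith
  · -- (0,2) : X = α, Y = α+u, pairing in (1,2); uses M > S from |α-v|²
    push_cast at eav e2XY e2YY
    refine pair_not_btwn hRS hα h1 1 (by rw [e2XY, e2YY]; push_cast; linarith) ?_
    rw [e2XY, e2YY]; push_cast; linarith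
  · -- (-1,2)
    push_cast at eav e2XY e2YY
    refine pair_not_btwn hRS hα h1 1 (by rw [e2XY, e2YY]; push_cast; linarith) ?_
    rw [e2XY, e2YY]; push_cast; linarith
  · -- (-1,3)
    push_cast at eav e2XY e2YY
    refine pair_not_btwn hRS hα h1 1 (by rw [e2XY, e2YY]; push_cast; linarith) ?_
    rw [e2XY, e2YY]; push_cast; linarith
  · -- (-2,3) : X = α+u, Y = α, pairing in (1,2); uses M > 2S
    push_cast at eav
    have e1 : 2 * B (α + u) α = 2 * B α α - 2 * B u u := by
      simp only [map_add, LinearMap.add_apply, sαu]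
      push_cast at hA
      linear_combination hA
    refine pair_not_btwn hRS h1 hα 1 (by rw [e1]; push_cast; linarith) ?_
    rw [e1]; push_cast; linarith

/-- the (-1,-2) configuration is impossible -/
lemma famII (hRS : IsRootSystem B Φ) (hu : u ∈ Φ) (hv : v ∈ Φ) (hα : α ∈ Φ)
    (h1 : α + u ∈ Φ) (h2 : α - v ∈ Φ) (h3 : α + u - v ∈ Φ) (huv : u + v ∈ Φ)
    (hc : 2 * B v u = -(B u u)) (hd : 2 * B u v = -2 * (B v v)) :
    False := by
  have hS : 0 < B u u := norm_pos hRS hu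
  have hvv : 0 < B v v := norm_pos hRS hv
  have hM : 0 < B α α := norm_pos hRS hα
  have suv : B v u = B u v := hRS.symm v u
  have sαu : B u α = B α u := hRS.symm u α
  have sαv : B v α = B α v := hRS.symm v α
  have hBuv : 2 * B u v = -(B u u) := by rw [← suv]; exact hc
  obtain ⟨A, hA⟩ := pair_int hRS hα hu
  obtain ⟨Bq, hB0⟩ := pair_int hRS hα hv
  have hα1 : α ≠ u := by
    intro h; rw [h] at h1
    have : (2:ℚ) • u ∈ Φ := by rw [two_smul]; exact h1
    rcases hRS.reduced u hu 2 this with h' | h' <;> norm_num at h'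
  have hα2 : α ≠ -u := by
    intro h; rw [h] at h1
    have : -u + u = 0 := by abel
    rw [this] at h1; exact hRS.ne_zero 0 h1 rfl
  have hα3 : α ≠ v := by
    intro h; rw [h] at h2
    rw [sub_self] at h2; exact hRS.ne_zero 0 h2 rfl
  have hα4 : α ≠ -v := by
    intro h; rw [h] at h2
    have : -v - v = (-2:ℚ) • v := by rw [neg_smul, two_smul]; abel
    rw [this] at h2
    rcases hRS.reduced v hv _ h2 with h' | h' <;> norm_num at h'
  have h3' : (α - v) + u ∈ Φ := by
    have : (α - v) + u = α + u - v := by abel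
    rwa [this]
  have h3'' : (α + u) - v ∈ Φ := h3
  have huv1 : (α - v) + (u + v) ∈ Φ := by
    have : (α - v) + (u + v) = α + u := by abel
    rwa [this]
  have huv2 : (α + u) - (u + v) ∈ Φ := by
    have : (α + u) - (u + v) = α - v := by abel
    rwa [this]
  have bA3 : -3 ≤ A := by
    have hb := (pair_bounds hRS hα hu hα1 hα2).1
    rw [hA] at hb
    have : (-3:ℚ) ≤ (A:ℚ) := by nlinarith
    exact_mod_cast this
  have bB3 : Bq ≤ 3 := by
    have hb := (pair_bounds hRS hα hv hα3 hα4).2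
    rw [hB0] at hb
    have : (Bq:ℚ) ≤ 3 := by nlinarith
    exact_mod_cast this
  have bA0 : A ≤ 0 := by
    have hb := pair_le_one hRS h2 hu h3'
    have e : 2 * B (α - v) u = (A:ℚ) * B u u + B u u := by
      simp only [map_sub, LinearMap.sub_apply]
      linear_combination hA - hc
    rw [e] at hb
    have : (A:ℚ) ≤ 0 := by nlinarith
    exact_mod_cast this
  have hvv2 : 2 * B v v = B u u := by linarith
  have bB1 : 1 ≤ Bq := by
    have hb := pair_ge_negone hRS h1 hv h3''
    have e : 2 * B (α + u) v = (Bq:ℚ) * B v v - 2 * B v v := by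
      simp only [map_add, LinearMap.add_apply]
      linear_combination hB0 + hBuv + hvv2
    rw [e] at hb
    have : (1:ℚ) ≤ (Bq:ℚ) := by nlinarith
    exact_mod_cast this
  have eR : B (u + v) (u + v) = B v v := by
    simp only [map_add, LinearMap.add_apply, suv]
    linear_combination hBuv
  have b2hi : 2 * A + Bq ≤ 1 := by
    have hb := pair_le_one hRS h2 huv huv1
    have eL : 2 * B (α - v) (u + v) = (2 * (A:ℚ) + (Bq:ℚ)) * B v v := by
      simp only [map_sub, map_add, LinearMap.sub_apply, LinearMap.add_apply, sαu, sαv, suv]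
      linear_combination hA + hB0 - hBuv + (-1 - (A:ℚ)) * hvv2
    rw [eL, eR] at hb
    have : 2 * (A:ℚ) + (Bq:ℚ) ≤ 1 := by nlinarith
    exact_mod_cast this
  have b2lo : -3 ≤ 2 * A + Bq := by
    have hb := pair_ge_negone hRS h1 huv huv2
    have eL : 2 * B (α + u) (u + v) = (2 * (A:ℚ) + (Bq:ℚ) + 2) * B v v := by
      simp only [map_add, LinearMap.add_apply, sαu, sαv, suv]
      linear_combination hA + hB0 + hBuv + (-(A:ℚ) - 1) * hvv2
    rw [eL, eR] at hb
    have : -3 ≤ 2 * (A:ℚ) + (Bq:ℚ) := by nlinarith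
    exact_mod_cast this
  have hcases : (A = 0 ∧ Bq = 1) ∨ (A = -1 ∧ Bq = 1) ∨ (A = -2 ∧ Bq = 1) ∨
      (A = -1 ∧ Bq = 2) ∨ (A = -2 ∧ Bq = 2) ∨ (A = -1 ∧ Bq = 3) ∨
      (A = -2 ∧ Bq = 3) ∨ (A = -3 ∧ Bq = 3) := by omega
  rcases hcases with ⟨rfl, rfl⟩ | ⟨rfl, rfl⟩ | ⟨rfl, rfl⟩ | ⟨rfl, rfl⟩ | ⟨rfl, rfl⟩ |
    ⟨rfl, rfl⟩ | ⟨rfl, rfl⟩ | ⟨rfl, rfl⟩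
  · -- (0,1)
    have e1 : 2 * B (α + u) (α + u - v) = 2 * B α α + (5/2) * B u u := by
      simp only [map_add, map_sub, LinearMap.add_apply, LinearMap.sub_apply, sαu, sαv, suv]
      push_cast at hA hB0
      linear_combination 2 * hA - hB0 - hBuv - (1/2) * hvv2
    have e2 : B (α + u - v) (α + u - v) = B α α + 2 * B u u := by
      simp only [map_add, map_sub, LinearMap.add_apply, LinearMap.sub_apply, sαu, sαv, suv]
      push_cast at hA hB0
      linear_combination hA - hB0 - hBuv
    exact pair_not_btwn hRS h1 h3 (1) (by rw [e1, e2]; push_cast; linarith)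
      (by rw [e1, e2]; push_cast; linarith)
  · -- (-1,1)
    have e1 : 2 * B (u + v) (α + u - v) = (1/2) * B u u := by
      simp only [map_add, map_sub, LinearMap.add_apply, LinearMap.sub_apply, sαu, sαv, suv]
      push_cast at hA hB0
      linear_combination hA + hB0 - (1/2) * hvv2
    have e2 : B (α + u - v) (α + u - v) = B α α + B u u := by
      simp only [map_add, map_sub, LinearMap.add_apply, LinearMap.sub_apply, sαu, sαv, suv]
      push_cast at hA hB0
      linear_combination hA - hB0 - hBuv
    exact pair_not_btwn hRS huv h3 (0) (by rw [e1, e2]; push_cast; linarith)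
      (by rw [e1, e2]; push_cast; linarith)
  · -- (-2,1)
    have hsrc : 0 < B (α + u) (α + u) := norm_pos hRS h1
    have esrc : B (α + u) (α + u) = B α α - B u u := by
      simp only [map_add, map_sub, LinearMap.add_apply, LinearMap.sub_apply, sαu, sαv, suv]
      push_cast at hA hB0
      linear_combination hA
    rw [esrc] at hsrc
    have e1 : 2 * B α (α - v) = 2 * B α α - (1/2) * B u u := by
      simp only [map_add, map_sub, LinearMap.add_apply, LinearMap.sub_apply, sαu, sαv, suv]
      push_cast at hA hB0
      linear_combination - hB0 - (1/2) * hvv2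
    have e2 : B (α - v) (α - v) = B α α := by
      simp only [map_add, map_sub, LinearMap.add_apply, LinearMap.sub_apply, sαu, sαv, suv]
      push_cast at hA hB0
      linear_combination - hB0
    exact pair_not_btwn hRS hα h2 (1) (by rw [e1, e2]; push_cast; linarith)
      (by rw [e1, e2]; push_cast; linarith)
  · -- (-1,2)
    have hsrc : 0 < B (α - v) (α - v) := norm_pos hRS h2
    have esrc : B (α - v) (α - v) = B α α - (1/2) * B u u := by
      simp only [map_add, map_sub, LinearMap.add_apply, LinearMap.sub_apply, sαu, sαv, suv]
      push_cast at hA hB0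
      linear_combination - hB0 - (1/2) * hvv2
    rw [esrc] at hsrc
    have e1 : 2 * B (α + u) (α + u - v) = 2 * B α α := by
      simp only [map_add, map_sub, LinearMap.add_apply, LinearMap.sub_apply, sαu, sαv, suv]
      push_cast at hA hB0
      linear_combination 2 * hA - hB0 - hBuv - hvv2
    have e2 : B (α + u - v) (α + u - v) = B α α + (1/2) * B u u := by
      simp only [map_add, map_sub, LinearMap.add_apply, LinearMap.sub_apply, sαu, sαv, suv]
      push_cast at hA hB0
      linear_combination hA - hB0 - hBuv - (1/2) * hvv2
    exact pair_not_btwn hRS h1 h3 (1) (by rw [e1, e2]; push_cast; linarith)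
      (by rw [e1, e2]; push_cast; linarith)
  · -- (-2,2)
    have hsrc : 0 < B (α + u) (α + u) := norm_pos hRS h1
    have esrc : B (α + u) (α + u) = B α α - B u u := by
      simp only [map_add, map_sub, LinearMap.add_apply, LinearMap.sub_apply, sαu, sαv, suv]
      push_cast at hA hB0
      linear_combination hA
    rw [esrc] at hsrc
    have e1 : 2 * B v α = B u u := by
      simp only [map_add, map_sub, LinearMap.add_apply, LinearMap.sub_apply, sαu, sαv, suv]
      push_cast at hA hB0
      linear_combination hB0 + hvv2
    exact pair_not_btwn hRS hv hα (0) (by rw [e1]; push_cast; linarith)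
      (by rw [e1]; push_cast; linarith)
  · -- (-1,3)
    have hsrc : 0 < B (α - v) (α - v) := norm_pos hRS h2
    have esrc : B (α - v) (α - v) = B α α - B u u := by
      simp only [map_add, map_sub, LinearMap.add_apply, LinearMap.sub_apply, sαu, sαv, suv]
      push_cast at hA hB0
      linear_combination - hB0 - hvv2
    rw [esrc] at hsrc
    have e1 : 2 * B α (α + u) = 2 * B α α - B u u := by
      simp only [map_add, map_sub, LinearMap.add_apply, LinearMap.sub_apply, sαu, sαv, suv]
      push_cast at hA hB0
      linear_combination hA
    have e2 : B (α + u) (α + u) = B α α := by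
      simp only [map_add, map_sub, LinearMap.add_apply, LinearMap.sub_apply, sαu, sαv, suv]
      push_cast at hA hB0
      linear_combination hA
    exact pair_not_btwn hRS hα h1 (1) (by rw [e1, e2]; push_cast; linarith)
      (by rw [e1, e2]; push_cast; linarith)
  · -- (-2,3)
    have hsrc : 0 < B (α + u) (α + u) := norm_pos hRS h1
    have esrc : B (α + u) (α + u) = B α α - B u u := by
      simp only [map_add, map_sub, LinearMap.add_apply, LinearMap.sub_apply, sαu, sαv, suv]
      push_cast at hA hB0
      linear_combination hA
    rw [esrc] at hsrc
    have e1 : 2 * B (u + v) α = - (1/2) * B u u := by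
      simp only [map_add, map_sub, LinearMap.add_apply, LinearMap.sub_apply, sαu, sαv, suv]
      push_cast at hA hB0
      linear_combination hA + hB0 + (3/2) * hvv2
    exact pair_not_btwn hRS huv hα (-1) (by rw [e1]; push_cast; linarith)
      (by rw [e1]; push_cast; linarith)
  · -- (-3,3)
    have hsrc : 0 < B (α + u) (α + u) := norm_pos hRS h1
    have esrc : B (α + u) (α + u) = B α α - 2 * B u u := by
      simp only [map_add, map_sub, LinearMap.add_apply, LinearMap.sub_apply, sαu, sαv, suv]
      push_cast at hA hB0
      linear_combination hA
    rw [esrc] at hsrc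
    have e1 : 2 * B (α - v) α = 2 * B α α - (3/2) * B u u := by
      simp only [map_add, map_sub, LinearMap.add_apply, LinearMap.sub_apply, sαu, sαv, suv]
      push_cast at hA hB0
      linear_combination - hB0 - (3/2) * hvv2
    exact pair_not_btwn hRS h2 hα (1) (by rw [e1]; push_cast; linarith)
      (by rw [e1]; push_cast; linarith)

/-- the (-1,-3) configuration is impossible -/
lemma famIII (hRS : IsRootSystem B Φ) (hu : u ∈ Φ) (hv : v ∈ Φ) (hα : α ∈ Φ)
    (h1 : α + u ∈ Φ) (h2 : α - v ∈ Φ) (h3 : α + u - v ∈ Φ) (huv : u + v ∈ Φ)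
    (hc : 2 * B v u = -(B u u)) (hd : 2 * B u v = -3 * (B v v)) :
    False := by
  have hS : 0 < B u u := norm_pos hRS hu
  have hvv : 0 < B v v := norm_pos hRS hv
  have hM : 0 < B α α := norm_pos hRS hα
  have suv : B v u = B u v := hRS.symm v u
  have sαu : B u α = B α u := hRS.symm u α
  have sαv : B v α = B α v := hRS.symm v α
  have hBuv : 2 * B u v = -(B u u) := by rw [← suv]; exact hc
  obtain ⟨A, hA⟩ := pair_int hRS hα hu
  obtain ⟨Bq, hB0⟩ := pair_int hRS hα hv
  have hα1 : α ≠ u := by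
    intro h; rw [h] at h1
    have : (2:ℚ) • u ∈ Φ := by rw [two_smul]; exact h1
    rcases hRS.reduced u hu 2 this with h' | h' <;> norm_num at h'
  have hα2 : α ≠ -u := by
    intro h; rw [h] at h1
    have : -u + u = 0 := by abel
    rw [this] at h1; exact hRS.ne_zero 0 h1 rfl
  have hα3 : α ≠ v := by
    intro h; rw [h] at h2
    rw [sub_self] at h2; exact hRS.ne_zero 0 h2 rfl
  have hα4 : α ≠ -v := by
    intro h; rw [h] at h2
    have : -v - v = (-2:ℚ) • v := by rw [neg_smul, two_smul]; abel
    rw [this] at h2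
    rcases hRS.reduced v hv _ h2 with h' | h' <;> norm_num at h'
  have h3' : (α - v) + u ∈ Φ := by
    have : (α - v) + u = α + u - v := by abel
    rwa [this]
  have h3'' : (α + u) - v ∈ Φ := h3
  have huv1 : (α - v) + (u + v) ∈ Φ := by
    have : (α - v) + (u + v) = α + u := by abel
    rwa [this]
  have huv2 : (α + u) - (u + v) ∈ Φ := by
    have : (α + u) - (u + v) = α - v := by abel
    rwa [this]
  have bA3 : -3 ≤ A := by
    have hb := (pair_bounds hRS hα hu hα1 hα2).1
    rw [hA] at hb
    have : (-3:ℚ) ≤ (A:ℚ) := by nlinarith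
    exact_mod_cast this
  have bB3 : Bq ≤ 3 := by
    have hb := (pair_bounds hRS hα hv hα3 hα4).2
    rw [hB0] at hb
    have : (Bq:ℚ) ≤ 3 := by nlinarith
    exact_mod_cast this
  have bA0 : A ≤ 0 := by
    have hb := pair_le_one hRS h2 hu h3'
    have e : 2 * B (α - v) u = (A:ℚ) * B u u + B u u := by
      simp only [map_sub, LinearMap.sub_apply]
      linear_combination hA - hc
    rw [e] at hb
    have : (A:ℚ) ≤ 0 := by nlinarith
    exact_mod_cast this
  have hvv3 : 3 * B v v = B u u := by linarith
  have bB2 : 2 ≤ Bq := by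
    have hb := pair_ge_negone hRS h1 hv h3''
    have e : 2 * B (α + u) v = (Bq:ℚ) * B v v - 3 * B v v := by
      simp only [map_add, LinearMap.add_apply]
      linear_combination hB0 + hBuv + hvv3
    rw [e] at hb
    have : (2:ℚ) ≤ (Bq:ℚ) := by nlinarith
    exact_mod_cast this
  have eR : B (u + v) (u + v) = B v v := by
    simp only [map_add, LinearMap.add_apply, suv]
    linear_combination hBuv
  have b3hi : 3 * A + Bq ≤ 0 := by
    have hb := pair_le_one hRS h2 huv huv1
    have eL : 2 * B (α - v) (u + v) = (3 * (A:ℚ) + (Bq:ℚ) + 1) * B v v := by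
      simp only [map_sub, map_add, LinearMap.sub_apply, LinearMap.add_apply, sαu, sαv, suv]
      linear_combination hA + hB0 - hBuv + (-1 - (A:ℚ)) * hvv3
    rw [eL, eR] at hb
    have : 3 * (A:ℚ) + (Bq:ℚ) ≤ 0 := by nlinarith
    exact_mod_cast this
  have b3lo : -4 ≤ 3 * A + Bq := by
    have hb := pair_ge_negone hRS h1 huv huv2
    have eL : 2 * B (α + u) (u + v) = (3 * (A:ℚ) + (Bq:ℚ) + 3) * B v v := by
      simp only [map_add, LinearMap.add_apply, sαu, sαv, suv]
      linear_combination hA + hB0 + hBuv + (-(A:ℚ) - 1) * hvv3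
    rw [eL, eR] at hb
    have : -4 ≤ 3 * (A:ℚ) + (Bq:ℚ) := by nlinarith
    exact_mod_cast this
  have hcases : (A = -1 ∧ Bq = 2) ∨ (A = -1 ∧ Bq = 3) ∨ (A = -2 ∧ Bq = 2) ∨
      (A = -2 ∧ Bq = 3) := by omega
  rcases hcases with ⟨rfl, rfl⟩ | ⟨rfl, rfl⟩ | ⟨rfl, rfl⟩ | ⟨rfl, rfl⟩
  · -- (-1,2)
    have hsrc : 0 < B (α - v) (α - v) := norm_pos hRS h2
    have esrc : B (α - v) (α - v) = B α α - (1/3) * B u u := by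
      simp only [map_add, map_sub, LinearMap.add_apply, LinearMap.sub_apply, sαu, sαv, suv]
      push_cast at hA hB0
      linear_combination - hB0 - (1/3) * hvv3
    rw [esrc] at hsrc
    have e1 : 2 * B (α + u) (α + u - v) = 2 * B α α + (1/3) * B u u := by
      simp only [map_add, map_sub, LinearMap.add_apply, LinearMap.sub_apply, sαu, sαv, suv]
      push_cast at hA hB0
      linear_combination 2 * hA - hB0 - hBuv - (2/3) * hvv3
    have e2 : B (α + u - v) (α + u - v) = B α α + (2/3) * B u u := by
      simp only [map_add, map_sub, LinearMap.add_apply, LinearMap.sub_apply, sαu, sαv, suv]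
      push_cast at hA hB0
      linear_combination hA - hB0 - hBuv - (1/3) * hvv3
    exact pair_not_btwn hRS h1 h3 (1) (by rw [e1, e2]; push_cast; linarith)
      (by rw [e1, e2]; push_cast; linarith)
  · -- (-1,3)
    have hsrc : 0 < B (α - v) (α - v) := norm_pos hRS h2
    have esrc : B (α - v) (α - v) = B α α - (2/3) * B u u := by
      simp only [map_add, map_sub, LinearMap.add_apply, LinearMap.sub_apply, sαu, sαv, suv]
      push_cast at hA hB0
      linear_combination - hB0 - (2/3) * hvv3
    rw [esrc] at hsrc
    have e1 : 2 * B (α + u) (α + u - v) = 2 * B α α := by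
      simp only [map_add, map_sub, LinearMap.add_apply, LinearMap.sub_apply, sαu, sαv, suv]
      push_cast at hA hB0
      linear_combination 2 * hA - hB0 - hBuv - hvv3
    have e2 : B (α + u - v) (α + u - v) = B α α + (1/3) * B u u := by
      simp only [map_add, map_sub, LinearMap.add_apply, LinearMap.sub_apply, sαu, sαv, suv]
      push_cast at hA hB0
      linear_combination hA - hB0 - hBuv - (2/3) * hvv3
    exact pair_not_btwn hRS h1 h3 (1) (by rw [e1, e2]; push_cast; linarith)
      (by rw [e1, e2]; push_cast; linarith)
  · -- (-2,2)
    have hsrc : 0 < B (α + u) (α + u) := norm_pos hRS h1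
    have esrc : B (α + u) (α + u) = B α α - B u u := by
      simp only [map_add, map_sub, LinearMap.add_apply, LinearMap.sub_apply, sαu, sαv, suv]
      push_cast at hA hB0
      linear_combination hA
    rw [esrc] at hsrc
    have e1 : 2 * B v α = (2/3) * B u u := by
      simp only [map_add, map_sub, LinearMap.add_apply, LinearMap.sub_apply, sαu, sαv, suv]
      push_cast at hA hB0
      linear_combination hB0 + (2/3) * hvv3
    exact pair_not_btwn hRS hv hα (0) (by rw [e1]; push_cast; linarith)
      (by rw [e1]; push_cast; linarith)
  · -- (-2,3)
    have hsrc : 0 < B (α + u) (α + u) := norm_pos hRS h1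
    have esrc : B (α + u) (α + u) = B α α - B u u := by
      simp only [map_add, map_sub, LinearMap.add_apply, LinearMap.sub_apply, sαu, sαv, suv]
      push_cast at hA hB0
      linear_combination hA
    rw [esrc] at hsrc
    have e1 : 2 * B (α - v) α = 2 * B α α - B u u := by
      simp only [map_add, map_sub, LinearMap.add_apply, LinearMap.sub_apply, sαu, sαv, suv]
      push_cast at hA hB0
      linear_combination - hB0 - hvv3
    exact pair_not_btwn hRS h2 hα (1) (by rw [e1]; push_cast; linarith)
      (by rw [e1]; push_cast; linarith)


end Fam

lemma base_comb {I : Type*} [Fintype I] {Φ : Set E} {a : I → E} (hbase : IsBase Φ a)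
    {i j : I} (hij : i ≠ j) (z w : ℚ) (h : z • a i + w • a j = 0) : z = 0 ∧ w = 0 := by
  classical
  have h' := linearIndependent_iff'.mp hbase.indep {i, j}
    (fun k => if k = i then z else if k = j then w else 0) ?_
  · constructor
    · have := h' i (by simp)
      simpa using this
    · have := h' j (by simp)
      simp [hij.symm] at this
      exact this
  · rw [Finset.sum_insert (by simp [hij])]
    simp [hij.symm]
    exact h

lemma base_diff_not_mem {I : Type*} [Fintype I] {Φ : Set E} {a : I → E} (hbase : IsBase Φ a)
    {i j : I} (hij : i ≠ j) : a i - a j ∉ Φ := by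
  classical
  intro hmem
  rcases hbase.posneg _ hmem with ⟨c, hc⟩ | ⟨c, hc⟩
  · -- a i - a j = ∑ c k • a k ; coefficient at j must be -1
    have h0 : ∑ k, (((if k = i then (1:ℚ) else 0) - (if k = j then 1 else 0)) - (c k : ℚ)) • a k = 0 := by
      simp only [sub_smul, Finset.sum_sub_distrib, ite_smul, one_smul, zero_smul]
      rw [Finset.sum_ite_eq' Finset.univ i a, Finset.sum_ite_eq' Finset.univ j a]
      simp only [Finset.mem_univ, if_true]
      rw [← hc]
      abel
    have h' := linearIndependent_iff'.mp hbase.indep Finset.univ _ h0 j (Finset.mem_univ j)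
    simp [hij.symm] at h'
    have : (0:ℚ) ≤ (c j : ℚ) := by positivity
    linarith
  · have h0 : ∑ k, (((if k = i then (1:ℚ) else 0) - (if k = j then 1 else 0)) + (c k : ℚ)) • a k = 0 := by
      simp only [add_smul, sub_smul, Finset.sum_add_distrib, Finset.sum_sub_distrib, ite_smul, one_smul, zero_smul]
      rw [Finset.sum_ite_eq' Finset.univ i a, Finset.sum_ite_eq' Finset.univ j a]
      simp only [Finset.mem_univ, if_true]
      rw [hc]
      abel
    have h' := linearIndependent_iff'.mp hbase.indep Finset.univ _ h0 i (Finset.mem_univ i)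
    simp [hij] at h'
    have : (0:ℚ) ≤ (c i : ℚ) := by positivity
    linarith

end RSAux

theorem root_string_product_identity
    {I : Type*} [Fintype I]
    (B : E →ₗ[ℚ] E →ₗ[ℚ] ℚ) (Φ : Set E) (hRS : IsRootSystem B Φ)
    (a : I → E) (hbase : IsBase Φ a) {i j : I} (hij : i ≠ j)
    {α : E} (hα : α ∈ Φ)
    (h1 : α + a i ∈ Φ) (h2 : α - a j ∈ Φ) (h3 : α + a i - a j ∈ Φ)
    (p1 q1 p2 q2 p3 q3 p4 q4 : ℕ)
    (hc1 : RootChain Φ (a i) (α - a j) p1 q1)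
    (hc2 : RootChain Φ (a j) α p2 q2)
    (hc3 : RootChain Φ (a j) (α + a i) p3 q3)
    (hc4 : RootChain Φ (a i) α p4 q4) :
    (q1 + 1) * (p2 + 1) = (p3 + 1) * (q4 + 1) := by
  classical
  set u := a i with hu_def
  set v := a j with hv_def
  have hu : u ∈ Φ := hbase.mem i
  have hv : v ∈ Φ := hbase.mem j
  have hS : 0 < B u u := RSAux.norm_pos hRS hu
  have hVV : 0 < B v v := RSAux.norm_pos hRS hv
  have hsym_uv : B v u = B u v := hRS.symm v u
  have not2 : ∀ {x : E}, x ∈ Φ → (2:ℚ) • x ∉ Φ := by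
    intro x hx h2x
    rcases hRS.reduced x hx 2 h2x with h | h <;> norm_num at h
  have huv_ne : u ≠ v := by
    intro h
    have := (RSAux.base_comb hbase hij 1 (-1) (by
      rw [one_smul, neg_one_smul, ← hu_def, ← hv_def, ← h]; abel)).1
    norm_num at this
  have hunv : u ≠ -v := by
    intro h
    have := (RSAux.base_comb hbase hij 1 1 (by
      rw [one_smul, one_smul, ← hu_def, ← hv_def, h]; abel)).1
    norm_num at this
  have hdiff : u - v ∉ Φ := RSAux.base_diff_not_mem hbase hij
  have hdiff' : v - u ∉ Φ := RSAux.base_diff_not_mem hbase hij.symm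
  rcases lt_trichotomy (B u v) 0 with hneg | hzero | hpos
  · -- non-orthogonal case : u + v ∈ Φ
    have huvmem : u + v ∈ Φ := RSAux.sum_mem hRS hu hv huv_ne hunv hneg
    obtain ⟨cI, hcI⟩ := RSAux.pair_int hRS hv hu
    obtain ⟨dI, hdI⟩ := RSAux.pair_int hRS hu hv
    have hcI' : 2 * B u v = (cI:ℚ) * B u u := by rw [← hsym_uv]; exact hcI
    have hcneg : cI ≤ -1 := by
      have : (cI:ℚ) < 0 := by nlinarith
      have : cI < 0 := by exact_mod_cast this
      omega
    have hdneg : dI ≤ -1 := by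
      have : (dI:ℚ) < 0 := by nlinarith
      have : dI < 0 := by exact_mod_cast this
      omega
    have hcs := RSAux.cs_strict hRS hu hv huv_ne hunv
    have hkey : ((cI:ℚ) * (dI:ℚ)) * (B u u * B v v) = 4 * (B u v)^2 := by
      linear_combination (-2 * B u v) * hcI' + (-(cI:ℚ) * B u u) * hdI
    have hprod : cI * dI ≤ 3 := by
      have h4 : ((cI:ℚ)) * (dI:ℚ) < 4 := by nlinarith
      have h4' : (cI * dI : ℤ) < 4 := by exact_mod_cast (by push_cast; linarith : ((cI * dI : ℤ):ℚ) < 4)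
      linarith
    have hcge : -3 ≤ cI := by nlinarith
    have hdge : -3 ≤ dI := by nlinarith
    have hcases : (cI = -1 ∧ dI = -1) ∨ (cI = -1 ∧ dI = -2) ∨ (cI = -2 ∧ dI = -1) ∨
        (cI = -1 ∧ dI = -3) ∨ (cI = -3 ∧ dI = -1) := by
      interval_cases cI <;> interval_cases dI <;> omega
    rcases hcases with ⟨hce, hde⟩ | ⟨hce, hde⟩ | ⟨hce, hde⟩ | ⟨hce, hde⟩ | ⟨hce, hde⟩
    · -- (-1,-1)
      rw [hce] at hcI
      rw [hde] at hdI
      have hcc : 2 * B v u = -(B u u) := by push_cast at hcI; linarith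
      have hdd : 2 * B u v = -(B v v) := by push_cast at hdI; linarith
      have hvveq : B v v = B u u := by linarith [hsym_uv]
      have hle := RSAux.famI hRS hu hv hα h1 h2 h3 huvmem hcc hdd
      have h1' : -(α + u - v) + u ∈ Φ := by
        rw [show -(α + u - v) + u = -(α - v) from by abel]
        exact RSAux.neg_mem hRS h2
      have h2' : -(α + u - v) - v ∈ Φ := by
        rw [show -(α + u - v) - v = -(α + u) from by abel]
        exact RSAux.neg_mem hRS h1
      have h3' : -(α + u - v) + u - v ∈ Φ := by
        rw [show -(α + u - v) + u - v = -α from by abel]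
        exact RSAux.neg_mem hRS hα
      have hge' := RSAux.famI hRS hu hv (RSAux.neg_mem hRS h3) h1' h2' h3' huvmem hcc hdd
      have n0 : B α u + B α v = 0 := by
        have he : B (-(α + u - v)) u + B (-(α + u - v)) v = -(B α u + B α v) := by
          simp only [map_neg, map_add, map_sub, LinearMap.neg_apply, LinearMap.add_apply,
            LinearMap.sub_apply]
          linear_combination hsym_uv + hvveq
        rw [he] at hge'
        linarith
      have eδ : B (u + v) (u + v) = B u u := by
        simp only [map_add, LinearMap.add_apply]
        linear_combination hsym_uv + hdd
      have hδne : B (u + v) (u + v) ≠ 0 := (RSAux.norm_pos hRS huvmem).ne'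
      have line1 : ∀ k : ℚ, (α - v) + k • u ∈ Φ → (α + u) + (-k) • v ∈ Φ := by
        intro k hk
        have hpair : pairingB B ((α - v) + k • u) (u + v) = k - 1 := by
          rw [pairingB, div_eq_iff hδne]
          simp only [map_add, map_sub, map_smul, LinearMap.add_apply, LinearMap.sub_apply,
            LinearMap.smul_apply, smul_eq_mul, eδ]
          linear_combination 2 * n0 + (-1 - k) * hvveq + (-1 - k) * hsym_uv
        have hrefl := hRS.reflMem (u + v) huvmem _ hk
        rw [hpair, show ((α - v) + k • u) - (k - 1) • (u + v) = (α + u) + (-k) • v from by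
          module] at hrefl
        exact hrefl
      have line2 : ∀ k : ℚ, (α + u) + k • v ∈ Φ → (α - v) + (-k) • u ∈ Φ := by
        intro k hk
        have hpair : pairingB B ((α + u) + k • v) (u + v) = k + 1 := by
          rw [pairingB, div_eq_iff hδne]
          simp only [map_add, map_smul, LinearMap.add_apply, LinearMap.smul_apply, smul_eq_mul, eδ]
          linear_combination 2 * n0 + (k - 1) * hvveq + (k - 1) * hsym_uv
        have hrefl := hRS.reflMem (u + v) huvmem _ hk
        rw [hpair, show ((α + u) + k • v) - (k + 1) • (u + v) = (α - v) + (-k) • u from by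
          module] at hrefl
        exact hrefl
      have line3 : ∀ k : ℚ, α + k • u ∈ Φ → α + (-k) • v ∈ Φ := by
        intro k hk
        have hpair : pairingB B (α + k • u) (u + v) = k := by
          rw [pairingB, div_eq_iff hδne]
          simp only [map_add, map_smul, LinearMap.add_apply, LinearMap.smul_apply, smul_eq_mul, eδ]
          linear_combination 2 * n0 - k * hvveq - k * hsym_uv
        have hrefl := hRS.reflMem (u + v) huvmem _ hk
        rw [hpair, show (α + k • u) - k • (u + v) = α + (-k) • v from by module] at hrefl
        exact hrefl
      have line4 : ∀ k : ℚ, α + k • v ∈ Φ → α + (-k) • u ∈ Φ := by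
        intro k hk
        have hpair : pairingB B (α + k • v) (u + v) = k := by
          rw [pairingB, div_eq_iff hδne]
          simp only [map_add, map_smul, LinearMap.add_apply, LinearMap.smul_apply, smul_eq_mul, eδ]
          linear_combination 2 * n0 + k * hvveq + k * hsym_uv
        have hrefl := hRS.reflMem (u + v) huvmem _ hk
        rw [hpair, show (α + k • v) - k • (u + v) = α + (-k) • u from by module] at hrefl
        exact hrefl
      have e13 : q1 = p3 := by
        apply le_antisymm
        · by_contra hlt
          push_neg at hlt
          have hmem := hc1.1 (-((p3:ℤ) + 1)) (by omega) (by omega)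
          have hcast : ((-((p3:ℤ) + 1) : ℤ):ℚ) = -((p3:ℚ) + 1) := by push_cast; ring
          rw [hcast] at hmem
          have hout := line1 _ hmem
          rw [neg_neg] at hout
          exact hc3.2.2 hout
        · by_contra hlt
          push_neg at hlt
          have hmem := hc3.1 ((q1:ℤ) + 1) (by omega) (by omega)
          have hcast : (((q1:ℤ) + 1 : ℤ):ℚ) = (q1:ℚ) + 1 := by push_cast; ring
          rw [hcast] at hmem
          have hout := line2 _ hmem
          rw [show (α - v) + (-((q1:ℚ) + 1)) • u = (α - v) - ((q1:ℚ) + 1) • u from by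
            module] at hout
          exact hc1.2.1 hout
      have e42 : q4 = p2 := by
        apply le_antisymm
        · by_contra hlt
          push_neg at hlt
          have hmem := hc4.1 (-((p2:ℤ) + 1)) (by omega) (by omega)
          have hcast : ((-((p2:ℤ) + 1) : ℤ):ℚ) = -((p2:ℚ) + 1) := by push_cast; ring
          rw [hcast] at hmem
          have hout := line3 _ hmem
          rw [neg_neg] at hout
          exact hc2.2.2 hout
        · by_contra hlt
          push_neg at hlt
          have hmem := hc2.1 ((q4:ℤ) + 1) (by omega) (by omega)
          have hcast : (((q4:ℤ) + 1 : ℤ):ℚ) = (q4:ℚ) + 1 := by push_cast; ring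
          rw [hcast] at hmem
          have hout := line4 _ hmem
          rw [show α + (-((q4:ℚ) + 1)) • u = α - ((q4:ℚ) + 1) • u from by module] at hout
          exact hc4.2.1 hout
      rw [e13, e42]
    · -- (-1,-2) : impossible
      rw [hce] at hcI
      rw [hde] at hdI
      have hcc : 2 * B v u = -(B u u) := by push_cast at hcI; linarith
      have hdd : 2 * B u v = -2 * (B v v) := by push_cast at hdI; linarith
      exact (RSAux.famII hRS hu hv hα h1 h2 h3 huvmem hcc hdd).elim
    · -- (-2,-1) : impossible (swap roles)
      rw [hce] at hcI
      rw [hde] at hdI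
      have hcc : 2 * B u v = -(B v v) := by push_cast at hdI; linarith
      have hdd : 2 * B v u = -2 * (B u u) := by push_cast at hcI; linarith
      have h1' : (α + u - v) + v ∈ Φ := by
        rw [show (α + u - v) + v = α + u from by abel]; exact h1
      have h2' : (α + u - v) - u ∈ Φ := by
        rw [show (α + u - v) - u = α - v from by abel]; exact h2
      have h3' : (α + u - v) + v - u ∈ Φ := by
        rw [show (α + u - v) + v - u = α from by abel]; exact hα
      have huv' : v + u ∈ Φ := by rw [add_comm]; exact huvmem
      exact (RSAux.famII hRS hv hu h3 h1' h2' h3' huv' hcc hdd).elim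
    · -- (-1,-3) : impossible
      rw [hce] at hcI
      rw [hde] at hdI
      have hcc : 2 * B v u = -(B u u) := by push_cast at hcI; linarith
      have hdd : 2 * B u v = -3 * (B v v) := by push_cast at hdI; linarith
      exact (RSAux.famIII hRS hu hv hα h1 h2 h3 huvmem hcc hdd).elim
    · -- (-3,-1) : impossible (swap roles)
      rw [hce] at hcI
      rw [hde] at hdI
      have hcc : 2 * B u v = -(B v v) := by push_cast at hdI; linarith
      have hdd : 2 * B v u = -3 * (B u u) := by push_cast at hcI; linarith
      have h1' : (α + u - v) + v ∈ Φ := by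
        rw [show (α + u - v) + v = α + u from by abel]; exact h1
      have h2' : (α + u - v) - u ∈ Φ := by
        rw [show (α + u - v) - u = α - v from by abel]; exact h2
      have h3' : (α + u - v) + v - u ∈ Φ := by
        rw [show (α + u - v) + v - u = α from by abel]; exact hα
      have huv' : v + u ∈ Φ := by rw [add_comm]; exact huvmem
      exact (RSAux.famIII hRS hv hu h3 h1' h2' h3' huv' hcc hdd).elim
  · -- orthogonal case
    have hnv : -v ∈ Φ := RSAux.neg_mem hRS hv
    have hnu : -u ∈ Φ := RSAux.neg_mem hRS hu
    have hzero' : B v u = 0 := by rw [hsym_uv]; exact hzero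
    have hsum_nr : u + v ∉ Φ := by
      intro hmem
      have he : B (u + v) v = B v v := by
        simp only [map_add, LinearMap.add_apply, hzero, zero_add]
      have hP : pairingB B (u + v) v = 2 := by
        rw [pairingB, div_eq_iff hVV.ne', he]
      have := hRS.reflMem v hv _ hmem
      rw [hP, show (u + v) - (2:ℚ) • v = u - v from by module] at this
      exact hdiff this
    have hsum_nr' : -(u + v) ∉ Φ := by
      intro h
      have := RSAux.neg_mem hRS h
      rw [neg_neg] at this
      exact hsum_nr this
    have hBunv : B u (-v) = 0 := by simp [hzero]
    have hBnvu : B (-v) u = 0 := by simp [hzero']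
    have hBnvnu : B (-v) (-u) = 0 := by simp [hzero']
    have e14 : q1 = q4 := by
      apply le_antisymm
      · -- q1 ≤ q4
        by_contra hlt
        push_neg at hlt  -- q4 < q1
        have hmem0 := hc1.1 (-(q4:ℤ)) (by omega) (by omega)
        have hmem1 := hc1.1 (-((q4:ℤ) + 1)) (by omega) (by omega)
        have hmem2 := hc4.1 (-(q4:ℤ)) (by omega) (by omega)
        have hca : ((-(q4:ℤ) : ℤ):ℚ) = -(q4:ℚ) := by push_cast; ring
        have hcb : ((-((q4:ℤ) + 1) : ℤ):ℚ) = -((q4:ℚ) + 1) := by push_cast; ring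
        rw [hca] at hmem0 hmem2
        rw [hcb] at hmem1
        have hrect := RSAux.rect hRS hu hnv hBunv
          (by rw [show u - -v = u + v from by module]; exact hsum_nr)
          (by rw [show -v - u = -(u + v) from by module]; exact hsum_nr')
          hmem0
          (by rw [show ((α - v) + (-(q4:ℚ)) • u) - u = (α - v) + (-((q4:ℚ) + 1)) • u from by
            module]; exact hmem1)
          (by rw [show ((α - v) + (-(q4:ℚ)) • u) - -v = α + (-(q4:ℚ)) • u from by
            module]; exact hmem2)
          (by
            intro hne
            have h1e : α + u = ((q4:ℚ) + 2) • u := by linear_combination (norm := module) hne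
            rw [h1e] at h1
            have hq : (0:ℚ) ≤ (q4:ℚ) := by positivity
            rcases hRS.reduced u hu _ h1 with h' | h' <;> linarith)
        rw [show ((α - v) + (-(q4:ℚ)) • u) - u - -v = α - ((q4:ℚ) + 1) • u from by
          module] at hrect
        exact hc4.2.1 hrect
      · -- q4 ≤ q1
        by_contra hlt
        push_neg at hlt  -- q1 < q4
        have hmem0 := hc4.1 (-(q1:ℤ)) (by omega) (by omega)
        have hmem1 := hc4.1 (-((q1:ℤ) + 1)) (by omega) (by omega)
        have hmem2 := hc1.1 (-(q1:ℤ)) (by omega) (by omega)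
        have hca : ((-(q1:ℤ) : ℤ):ℚ) = -(q1:ℚ) := by push_cast; ring
        have hcb : ((-((q1:ℤ) + 1) : ℤ):ℚ) = -((q1:ℚ) + 1) := by push_cast; ring
        rw [hca] at hmem0 hmem2
        rw [hcb] at hmem1
        have hrect := RSAux.rect hRS hu hv hzero hdiff hdiff'
          hmem0
          (by rw [show (α + (-(q1:ℚ)) • u) - u = α + (-((q1:ℚ) + 1)) • u from by
            module]; exact hmem1)
          (by rw [show (α + (-(q1:ℚ)) • u) - v = (α - v) + (-(q1:ℚ)) • u from by
            module]; exact hmem2)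
          (by
            intro hne
            have h3e : α + u - v = ((q1:ℚ) + 2) • u := by
              linear_combination (norm := module) hne
            rw [h3e] at h3
            have hq : (0:ℚ) ≤ (q1:ℚ) := by positivity
            rcases hRS.reduced u hu _ h3 with h' | h' <;> linarith)
        rw [show (α + (-(q1:ℚ)) • u) - u - v = (α - v) - ((q1:ℚ) + 1) • u from by
          module] at hrect
        exact hc1.2.1 hrect
    have e23 : p2 = p3 := by
      apply le_antisymm
      · -- p2 ≤ p3
        by_contra hlt
        push_neg at hlt  -- p3 < p2
        have hmem0 := hc2.1 ((p3:ℤ)) (by omega) (by omega)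
        have hmem1 := hc2.1 ((p3:ℤ) + 1) (by omega) (by omega)
        have hmem2 := hc3.1 ((p3:ℤ)) (by omega) (by omega)
        have hca : (((p3:ℤ) : ℤ):ℚ) = (p3:ℚ) := by push_cast; ring
        have hcb : (((p3:ℤ) + 1 : ℤ):ℚ) = ((p3:ℚ) + 1) := by push_cast; ring
        rw [hca] at hmem0 hmem2
        rw [hcb] at hmem1
        have hrect := RSAux.rect hRS hnv hnu hBnvnu
          (by rw [show -v - -u = u - v from by module]; exact hdiff)
          (by rw [show -u - -v = v - u from by module]; exact hdiff')
          hmem0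
          (by rw [show (α + (p3:ℚ) • v) - -v = α + ((p3:ℚ) + 1) • v from by
            module]; exact hmem1)
          (by rw [show (α + (p3:ℚ) • v) - -u = (α + u) + (p3:ℚ) • v from by
            module]; exact hmem2)
          (by
            intro hne
            have h3e : α + u - v = (-((p3:ℚ) + 2)) • v := by
              linear_combination (norm := module) hne
            rw [h3e] at h3
            have hq : (0:ℚ) ≤ (p3:ℚ) := by positivity
            rcases hRS.reduced v hv _ h3 with h' | h' <;> linarith)
        rw [show (α + (p3:ℚ) • v) - -v - -u = (α + u) + ((p3:ℚ) + 1) • v from by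
          module] at hrect
        exact hc3.2.2 hrect
      · -- p3 ≤ p2
        by_contra hlt
        push_neg at hlt  -- p2 < p3
        have hmem0 := hc3.1 ((p2:ℤ)) (by omega) (by omega)
        have hmem1 := hc3.1 ((p2:ℤ) + 1) (by omega) (by omega)
        have hmem2 := hc2.1 ((p2:ℤ)) (by omega) (by omega)
        have hca : (((p2:ℤ) : ℤ):ℚ) = (p2:ℚ) := by push_cast; ring
        have hcb : (((p2:ℤ) + 1 : ℤ):ℚ) = ((p2:ℚ) + 1) := by push_cast; ring
        rw [hca] at hmem0 hmem2
        rw [hcb] at hmem1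
        have hrect := RSAux.rect hRS hnv hu hBnvu
          (by rw [show -v - u = -(u + v) from by module]; exact hsum_nr')
          (by rw [show u - -v = u + v from by module]; exact hsum_nr)
          hmem0
          (by rw [show ((α + u) + (p2:ℚ) • v) - -v = (α + u) + ((p2:ℚ) + 1) • v from by
            module]; exact hmem1)
          (by rw [show ((α + u) + (p2:ℚ) • v) - u = α + (p2:ℚ) • v from by
            module]; exact hmem2)
          (by
            intro hne
            have h2e : α - v = (-((p2:ℚ) + 2)) • v := by
              linear_combination (norm := module) hne
            rw [h2e] at h2
            have hq : (0:ℚ) ≤ (p2:ℚ) := by positivity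
            rcases hRS.reduced v hv _ h2 with h' | h' <;> linarith)
        rw [show ((α + u) + (p2:ℚ) • v) - -v - u = α + ((p2:ℚ) + 1) • v from by
          module] at hrect
        exact hc2.2.2 hrect
    rw [e14, e23]
    ring
  · exact absurd (RSAux.sub_mem hRS hu hv huv_ne hunv hpos) hdiff
end
end

section
/- For all i, j ∈ I one has h_j ∘ e_i − e_i ∘ h_j = (α_i, α_j^∨) e_i and h_j ∘ f_i − f_i ∘ h_j = −(α_i, α_j^∨) f_i. -/
noncomputable section

variable {E : Type*} [AddCommGroup E] [Module ℚ E]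

lemma pairingB_add (B : E →ₗ[ℚ] E →ₗ[ℚ] ℚ) (x y α : E) :
    pairingB B (x + y) α = pairingB B x α + pairingB B y α := by
  simp [pairingB, mul_add, add_div]

lemma pairingB_sub (B : E →ₗ[ℚ] E →ₗ[ℚ] ℚ) (x y α : E) :
    pairingB B (x - y) α = pairingB B x α - pairingB B y α := by
  simp [pairingB, mul_sub, sub_div]

lemma pairingB_neg (B : E →ₗ[ℚ] E →ₗ[ℚ] ℚ) (x α : E) :
    pairingB B (-x) α = -pairingB B x α := by
  simp [pairingB, neg_div]

theorem h_e_f_commutator_relations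
    {I : Type*} [Fintype I]
    (B : E →ₗ[ℚ] E →ₗ[ℚ] ℚ) (Φ : Set E) (hRS : IsRootSystem B Φ)
    (a : I → E) (hbase : IsBase Φ a)
    {M : Type*} [AddCommGroup M] [Module ℂ M]
    (b : Module.Basis (I ⊕ {x : E // x ∈ Φ}) ℂ M)
    (e f h : I → M →ₗ[ℂ] M) (mp mm : I → E → ℕ)
(hm : ∀ i, ∀ α ∈ Φ, α ≠ a i → α ≠ -a i →
      ∃ p q : ℕ, RootChain Φ (a i) α p q ∧ mp i α = p + 1 ∧ mm i α = q + 1)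
(he_u : ∀ i j, e i (b (Sum.inl j)) =
      ((|pairingB B (a i) (a j)| : ℚ) : ℂ) • b (Sum.inr ⟨a i, hbase.mem i⟩))
    (he_v : ∀ i (α : {x : E // x ∈ Φ}) (hmem : (α : E) + a i ∈ Φ),
      e i (b (Sum.inr α)) = ((mm i (α : E) : ℕ) : ℂ) • b (Sum.inr ⟨(α : E) + a i, hmem⟩))
    (he_neg : ∀ i (α : {x : E // x ∈ Φ}), (α : E) = -a i →
      e i (b (Sum.inr α)) = b (Sum.inl i))
    (he_zero : ∀ i (α : {x : E // x ∈ Φ}), (α : E) + a i ∉ Φ → (α : E) ≠ -a i →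
      e i (b (Sum.inr α)) = 0)
    (hf_u : ∀ i j (β : {x : E // x ∈ Φ}), (β : E) = -a i →
      f i (b (Sum.inl j)) = ((|pairingB B (a i) (a j)| : ℚ) : ℂ) • b (Sum.inr β))
    (hf_v : ∀ i (α : {x : E // x ∈ Φ}) (hmem : (α : E) - a i ∈ Φ),
      f i (b (Sum.inr α)) = ((mp i (α : E) : ℕ) : ℂ) • b (Sum.inr ⟨(α : E) - a i, hmem⟩))
    (hf_pos : ∀ i (α : {x : E // x ∈ Φ}), (α : E) = a i →
      f i (b (Sum.inr α)) = b (Sum.inl i))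
    (hf_zero : ∀ i (α : {x : E // x ∈ Φ}), (α : E) - a i ∉ Φ → (α : E) ≠ a i →
      f i (b (Sum.inr α)) = 0)
(hh_u : ∀ i j, h i (b (Sum.inl j)) = 0)
    (hh_v : ∀ i (α : {x : E // x ∈ Φ}),
      h i (b (Sum.inr α)) = ((pairingB B (α : E) (a i) : ℚ) : ℂ) • b (Sum.inr α)) :
    ∀ i j, h j ∘ₗ e i - e i ∘ₗ h j = ((pairingB B (a i) (a j) : ℚ) : ℂ) • e i ∧
      h j ∘ₗ f i - f i ∘ₗ h j = -(((pairingB B (a i) (a j) : ℚ) : ℂ) • f i) := by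
  -- negatives of simple roots are roots
  have hneg_mem : ∀ i, -a i ∈ Φ := by
    intro i
    have hai := hbase.mem i
    have hne : a i ≠ 0 := hRS.ne_zero _ hai
    have hB : B (a i) (a i) ≠ 0 := ne_of_gt (hRS.posdef _ hne)
    have h2 : pairingB B (a i) (a i) = 2 := by
      unfold pairingB
      field_simp
    have h4 := hRS.reflMem (a i) hai (a i) hai
    rw [h2] at h4
    have h5 : a i - (2 : ℚ) • a i = -a i := by
      rw [two_smul]; abel
    rwa [h5] at h4
  intro i j
  constructor
  · apply b.ext
    rintro (j' | α)
    · simp only [LinearMap.sub_apply, LinearMap.comp_apply, LinearMap.smul_apply,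
        he_u, hh_u, map_zero, map_smul, hh_v]
      rw [smul_smul, smul_smul, sub_zero, mul_comm]
    · by_cases h1 : (α : E) + a i ∈ Φ
      · simp only [LinearMap.sub_apply, LinearMap.comp_apply, LinearMap.smul_apply,
          hh_v, map_smul, he_v i α h1]
        simp only [smul_smul, ← sub_smul]
        congr 1
        rw [pairingB_add]
        push_cast
        ring
      · by_cases h2 : (α : E) = -a i
        · simp only [LinearMap.sub_apply, LinearMap.comp_apply, LinearMap.smul_apply,
            hh_v, map_smul, he_neg i α h2, hh_u]
          rw [h2, pairingB_neg]
          push_cast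
          module
        · simp only [LinearMap.sub_apply, LinearMap.comp_apply, LinearMap.smul_apply,
            hh_v, map_smul, he_zero i α h1 h2, map_zero, smul_zero, sub_zero]
  · apply b.ext
    rintro (j' | α)
    · simp only [LinearMap.sub_apply, LinearMap.comp_apply, LinearMap.neg_apply,
        LinearMap.smul_apply, hf_u i j' ⟨-a i, hneg_mem i⟩ rfl, hh_u, map_zero, map_smul, hh_v]
      rw [pairingB_neg]
      push_cast
      module
    · by_cases h1 : (α : E) - a i ∈ Φ
      · simp only [LinearMap.sub_apply, LinearMap.comp_apply, LinearMap.neg_apply,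
          LinearMap.smul_apply, hh_v, map_smul, hf_v i α h1]
        simp only [smul_smul, ← sub_smul, ← neg_smul]
        congr 1
        rw [pairingB_sub]
        push_cast
        ring
      · by_cases h2 : (α : E) = a i
        · simp only [LinearMap.sub_apply, LinearMap.comp_apply, LinearMap.neg_apply,
            LinearMap.smul_apply, hh_v, map_smul, hf_pos i α h2, hh_u]
          rw [h2]
          push_cast
          module
        · simp only [LinearMap.sub_apply, LinearMap.comp_apply, LinearMap.neg_apply,
            LinearMap.smul_apply, hh_v, map_smul, hf_zero i α h1 h2, map_zero, smul_zero,
            sub_zero, neg_zero]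
end
end

section
/- For all i ∈ I one has e_i ∘ f_i − f_i ∘ e_i = h_i. -/
noncomputable section

variable {E : Type*} [AddCommGroup E] [Module ℚ E]

variable {B : E →ₗ[ℚ] E →ₗ[ℚ] ℚ} {Φ : Set E} {α β γ x : E}

namespace Aux

lemma baa_pos (hRS : IsRootSystem B Φ) (ha : α ∈ Φ) : 0 < B α α :=
  hRS.posdef α (hRS.ne_zero α ha)

lemma pairing_self (hRS : IsRootSystem B Φ) (ha : α ∈ Φ) : pairingB B α α = 2 := by
  have := (baa_pos hRS ha).ne'
  unfold pairingB; field_simp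

lemma neg_mem (hRS : IsRootSystem B Φ) (ha : α ∈ Φ) : -α ∈ Φ := by
  have := hRS.reflMem α ha α ha
  rwa [pairing_self hRS ha, two_smul, sub_add_eq_sub_sub, sub_self, zero_sub] at this

lemma pairing_pos_iff (hRS : IsRootSystem B Φ) (ha : α ∈ Φ) :
    0 < pairingB B β α ↔ 0 < B β α := by
  unfold pairingB
  rw [div_pos_iff]
  constructor
  · rintro (⟨h1, _⟩ | ⟨_, h2⟩)
    · linarith
    · exact absurd (baa_pos hRS ha) (by linarith)
  · intro h; exact Or.inl ⟨by linarith, baa_pos hRS ha⟩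

lemma cs_strict (hRS : IsRootSystem B Φ) (ha : α ∈ Φ) (hb : β ∈ Φ)
    (hne : α ≠ β) (hne' : α ≠ -β) : (B α β) ^ 2 < B α α * B β β := by
  set x := B β β • α - B α β • β with hx
  have hx0 : x ≠ 0 := by
    intro h0
    have : B β β • α = B α β • β := by
      have := sub_eq_zero.mp h0; exact this
    have hbb := (baa_pos hRS hb).ne'
    have hα : α = (B α β / B β β) • β := by
      rw [div_eq_inv_mul, mul_smul]
      rw [← this, smul_smul, inv_mul_cancel₀ hbb, one_smul]
    have := hRS.reduced β hb (B α β / B β β) (by rw [← hα]; exact ha)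
    rcases this with h | h
    · apply hne; rw [hα, h, one_smul]
    · apply hne'; rw [hα, h, neg_one_smul]
  have hxx : 0 < B x x := hRS.posdef x hx0
  have hexp : B x x = B β β * (B α α * B β β - (B α β)^2) := by
    rw [hx]
    simp only [map_sub, map_smul, LinearMap.sub_apply, LinearMap.smul_apply, smul_eq_mul]
    rw [hRS.symm β α]
    ring
  rw [hexp] at hxx
  nlinarith [baa_pos hRS hb]

lemma sub_mem (hRS : IsRootSystem B Φ) (ha : α ∈ Φ) (hb : β ∈ Φ)
    (hne : α ≠ β) (hpos : 0 < B α β) : α - β ∈ Φ := by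
  have hne' : α ≠ -β := by
    rintro rfl
    have := baa_pos hRS hb
    simp only [map_neg, LinearMap.neg_apply] at hpos
    linarith
  obtain ⟨m, hm⟩ := hRS.cryst β hb α ha
  obtain ⟨n, hn⟩ := hRS.cryst α ha β hb
  have hm1 : (1:ℚ) ≤ m := by
    have : 0 < pairingB B α β := (pairing_pos_iff hRS hb).mpr hpos
    rw [hm] at this
    exact_mod_cast this
  have hn1 : (1:ℚ) ≤ n := by
    have : 0 < pairingB B β α := (pairing_pos_iff hRS ha).mpr (by rwa [hRS.symm β α])
    rw [hn] at this
    exact_mod_cast this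
  have hcs := cs_strict hRS ha hb hne hne'
  have hprod : (m : ℚ) * n < 4 := by
    have haa := baa_pos hRS ha
    have hbb := baa_pos hRS hb
    have : (m:ℚ) * n = 4 * (B α β)^2 / (B α α * B β β) := by
      rw [← hm, ← hn]; unfold pairingB
      rw [hRS.symm β α]
      field_simp
      ring
    rw [this]
    rw [div_lt_iff₀ (by positivity)]
    nlinarith
  have : m = 1 ∨ n = 1 := by
    by_contra hcon
    push_neg at hcon
    have hm2 : (2:ℚ) ≤ m := by
      have h1 : (1:ℤ) ≤ m := by exact_mod_cast hm1
      have h2 : (2:ℤ) ≤ m := by omega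
      exact_mod_cast h2
    have hn2 : (2:ℚ) ≤ n := by
      have h1 : (1:ℤ) ≤ n := by exact_mod_cast hn1
      have h2 : (2:ℤ) ≤ n := by omega
      exact_mod_cast h2
    nlinarith
  rcases this with h | h
  · have := hRS.reflMem β hb α ha
    rwa [hm, h, Int.cast_one, one_smul] at this
  · have := hRS.reflMem α ha β hb
    rw [hn, h, Int.cast_one, one_smul] at this
    have := neg_mem hRS this
    rwa [neg_sub] at this

end Aux

namespace Aux

variable {B : E →ₗ[ℚ] E →ₗ[ℚ] ℚ} {Φ : Set E} {α β : E}

lemma pairing_add_smul (hRS : IsRootSystem B Φ) (ha : α ∈ Φ) (β : E) (t : ℚ) :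
    pairingB B (β + t • α) α = pairingB B β α + 2 * t := by
  have haa := (baa_pos hRS ha).ne'
  unfold pairingB
  simp only [map_add, map_smul, LinearMap.add_apply, LinearMap.smul_apply, smul_eq_mul]
  field_simp

/-- If `μ ∈ Φ`, `μ` is not a rational multiple of `α`, and `μ - α ∉ Φ`,
then `pairingB μ α ≤ 0`. -/
lemma pairing_nonpos_of_bottom (hRS : IsRootSystem B Φ) (ha : α ∈ Φ) {μ : E}
    (hμ : μ ∈ Φ) (hne : μ ≠ α) (htop : μ - α ∉ Φ) : pairingB B μ α ≤ 0 := by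
  by_contra hcon
  push_neg at hcon
  have hb : 0 < B μ α := (pairing_pos_iff hRS ha).mp hcon
  exact htop (sub_mem hRS hμ ha hne hb)

lemma pairing_nonneg_of_top (hRS : IsRootSystem B Φ) (ha : α ∈ Φ) {μ : E}
    (hμ : μ ∈ Φ) (hne : μ ≠ -α) (htop : μ + α ∉ Φ) : 0 ≤ pairingB B μ α := by
  have hna : -α ∈ Φ := neg_mem hRS ha
  by_contra hcon
  push_neg at hcon
  have hb : 0 < B μ (-α) := by
    have : B μ α < 0 := by
      by_contra h
      push_neg at h
      have haa := baa_pos hRS ha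
      have : 0 ≤ pairingB B μ α := by
        unfold pairingB
        positivity
      linarith
    simp only [map_neg]
    linarith
  have := sub_mem hRS hμ hna hne hb
  rw [sub_neg_eq_add] at this
  exact htop this

/-- Exactness of root strings. -/
lemma string_exact (hRS : IsRootSystem B Φ) (ha : α ∈ Φ) (hβ : β ∈ Φ)
    (hβa : ∀ t : ℚ, β ≠ t • α) {p q : ℕ} (hc : RootChain Φ α β p q) :
    ∀ k : ℤ, (β + (k : ℚ) • α ∈ Φ ↔ -(q:ℤ) ≤ k ∧ k ≤ (p:ℤ)) := by
  obtain ⟨hmem, hbot, htop⟩ := hc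
  -- the line through β never meets ±α
  have hline : ∀ m : ℤ, β + (m:ℚ) • α ≠ α ∧ β + (m:ℚ) • α ≠ -α := by
    intro m
    constructor
    · intro h
      exact hβa (1 - m) (by linear_combination (norm := module) h)
    · intro h
      exact hβa (-1 - m) (by linear_combination (norm := module) h)
  set c := pairingB B β α with hcdef
  -- top endpoint:  c + 2p ≥ 0
  have htopineq : 0 ≤ c + 2 * p := by
    have h1 : β + (p:ℚ) • α ∈ Φ := by
      have := hmem p (by
        have : (0:ℤ) ≤ p := Int.ofNat_nonneg p
        omega) le_rfl
      exact_mod_cast this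
    have h2 : (β + (p:ℚ) • α) + α ∉ Φ := by
      intro h
      apply htop
      have : β + ((p:ℚ) + 1) • α = (β + (p:ℚ) • α) + α := by
        rw [add_smul, one_smul]; abel
      rwa [this]
    have := pairing_nonneg_of_top hRS ha h1 ((hline p).2) h2
    rwa [pairing_add_smul hRS ha] at this
  -- bottom endpoint: c - 2q ≤ 0
  have hbotineq : c - 2 * q ≤ 0 := by
    have h1 : β + ((-q : ℤ):ℚ) • α ∈ Φ := hmem (-q) le_rfl (by omega)
    have h2 : (β + ((-q : ℤ):ℚ) • α) - α ∉ Φ := by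
      intro h
      apply hbot
      have : β - ((q:ℚ) + 1) • α = (β + ((-q : ℤ):ℚ) • α) - α := by
        push_cast
        rw [add_smul, one_smul, neg_smul]; abel
      rwa [this]
    have := pairing_nonpos_of_bottom hRS ha h1 ((hline (-q)).1) h2
    rw [pairing_add_smul hRS ha] at this
    push_cast at this ⊢
    linarith
  intro k
  constructor
  · intro hk
    constructor
    · -- k ≥ -q : no roots below the string
      by_contra hlt
      push_neg at hlt
      -- let m₀ be the greatest integer ≤ -q-1 with β + m₀ α ∈ Φ
      have hbdd : ∃ m : ℤ, m < -(q:ℤ) ∧ β + (m:ℚ) • α ∈ Φ := ⟨k, hlt, hk⟩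
      -- take the greatest such m (bounded above by -q-1)
      obtain ⟨m₀, ⟨hm₀lt, hm₀mem⟩, hmax⟩ :=
        Int.exists_greatest_of_bdd
          ⟨-(q:ℤ) - 1, fun z hz => by have := hz.1; omega⟩ hbdd
      -- β + (m₀+1) α ∉ Φ
      have hnot : β + ((m₀:ℚ) + 1) • α ∉ Φ := by
        intro hmem'
        have h1 : β + ((m₀ + 1 : ℤ):ℚ) • α ∈ Φ := by push_cast; exact_mod_cast hmem'
        by_cases hcase : m₀ + 1 < -(q:ℤ)
        · have := hmax (m₀ + 1) ⟨hcase, h1⟩; omega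
        ·
          -- m₀ < -q and m₀+1 ≥ -q means m₀ = -q-1, so β + m₀ α = β - (q+1)α ∈ Φ, contra hbot
          have : m₀ = -(q:ℤ) - 1 := by omega
          apply hbot
          have heq : β - ((q:ℚ) + 1) • α = β + ((m₀:ℚ)) • α := by
            rw [this]; push_cast; module
          rw [heq]; exact hm₀mem
      by_cases hcase : m₀ = -(q:ℤ) - 1
      · apply hbot
        have heq : β - ((q:ℚ) + 1) • α = β + ((m₀:ℚ)) • α := by
          rw [hcase]; push_cast; module
        rw [heq]; exact hm₀mem
      · -- m₀ ≤ -q-2, top of a lower string: pairing ≥ 0 gives contradiction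
        have hm2 : m₀ ≤ -(q:ℤ) - 2 := by omega
        have h2 : (β + (m₀:ℚ) • α) + α ∉ Φ := by
          intro h
          apply hnot
          have : β + ((m₀:ℚ) + 1) • α = (β + (m₀:ℚ) • α) + α := by
            rw [add_smul, one_smul]; abel
          rwa [this]
        have := pairing_nonneg_of_top hRS ha hm₀mem ((hline m₀).2) h2
        rw [pairing_add_smul hRS ha] at this
        have : (0:ℚ) ≤ c + 2 * m₀ := this
        have hm2' : (m₀:ℚ) ≤ -(q:ℚ) - 2 := by exact_mod_cast hm2
        linarith
    · -- k ≤ p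
      by_contra hlt
      push_neg at hlt
      have hbdd : ∃ m : ℤ, (p:ℤ) < m ∧ β + (m:ℚ) • α ∈ Φ := ⟨k, hlt, hk⟩
      obtain ⟨m₀, ⟨hm₀lt, hm₀mem⟩, hmin⟩ :=
        Int.exists_least_of_bdd
          ⟨(p:ℤ) + 1, fun z hz => by have := hz.1; omega⟩ hbdd
      have hnot : β + ((m₀:ℚ) - 1) • α ∉ Φ := by
        intro hmem'
        have h1 : β + ((m₀ - 1 : ℤ):ℚ) • α ∈ Φ := by push_cast; exact_mod_cast hmem'
        by_cases hcase : (p:ℤ) < m₀ - 1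
        · have := hmin (m₀ - 1) ⟨hcase, h1⟩; omega
        · have : m₀ = (p:ℤ) + 1 := by omega
          apply htop
          have heq : β + ((p:ℚ) + 1) • α = β + ((m₀:ℚ)) • α := by
            rw [this]; push_cast; ring_nf
          rw [heq]; exact hm₀mem
      by_cases hcase : m₀ = (p:ℤ) + 1
      · apply htop
        have heq : β + ((p:ℚ) + 1) • α = β + ((m₀:ℚ)) • α := by
          rw [hcase]; push_cast; ring_nf
        rw [heq]; exact hm₀mem
      · have hm2 : (p:ℤ) + 2 ≤ m₀ := by omega
        have h2 : (β + (m₀:ℚ) • α) - α ∉ Φ := by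
          intro h
          apply hnot
          have : β + ((m₀:ℚ) - 1) • α = (β + (m₀:ℚ) • α) - α := by
            rw [sub_smul, one_smul]; abel
          rwa [this]
        have := pairing_nonpos_of_bottom hRS ha hm₀mem ((hline m₀).1) h2
        rw [pairing_add_smul hRS ha] at this
        have hm2' : ((p:ℚ)) + 2 ≤ (m₀:ℚ) := by exact_mod_cast hm2
        linarith
  · intro ⟨h1, h2⟩
    exact hmem k h1 h2

/-- The pairing equals `q - p`. -/
lemma string_pairing (hRS : IsRootSystem B Φ) (ha : α ∈ Φ) (hβ : β ∈ Φ)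
    (hβa : ∀ t : ℚ, β ≠ t • α) {p q : ℕ} (hc : RootChain Φ α β p q) :
    pairingB B β α = (q : ℚ) - (p : ℚ) := by
  obtain ⟨n, hn⟩ := hRS.cryst α ha β hβ
  have hex := string_exact hRS ha hβ hβa hc
  -- reflect the top: β + (-n - p) α ∈ Φ
  have htopmem : β + (p:ℚ) • α ∈ Φ := (hex p).mpr ⟨by omega, le_rfl⟩
  have hrefl1 := hRS.reflMem α ha _ htopmem
  rw [pairing_add_smul hRS ha, hn] at hrefl1
  have hrefl1' : β + ((-n - p : ℤ):ℚ) • α ∈ Φ := by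
    have heq : β + ((-n - p : ℤ):ℚ) • α
        = β + (p:ℚ) • α - ((n:ℚ) + 2 * (p:ℚ)) • α := by
      push_cast
      rw [sub_smul, add_smul, neg_smul]
      module
    rw [heq]; exact hrefl1
  have h1 := ((hex (-n - p)).mp hrefl1').1
  -- reflect the bottom: β + (n? ...) use -q
  have hbotmem : β + ((-q : ℤ):ℚ) • α ∈ Φ := (hex (-q)).mpr ⟨le_rfl, by omega⟩
  have hrefl2 := hRS.reflMem α ha _ hbotmem
  rw [pairing_add_smul hRS ha, hn] at hrefl2
  have hrefl2' : β + ((q - n : ℤ):ℚ) • α ∈ Φ := by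
    have heq : β + ((q - n : ℤ):ℚ) • α
        = β + ((-q : ℤ):ℚ) • α - ((n:ℚ) + 2 * ((-q : ℤ):ℚ)) • α := by
      push_cast
      module
    rw [heq]; exact hrefl2
  have h2 := ((hex (q - n)).mp hrefl2').2
  have : n = (q:ℤ) - p := by omega
  rw [hn, this]; push_cast; ring

lemma chain_shift_up (hRS : IsRootSystem B Φ) (ha : α ∈ Φ) (hβ : β ∈ Φ)
    (hβa : ∀ t : ℚ, β ≠ t • α) {p q p' q' : ℕ} (hc : RootChain Φ α β p q)
    (hβ' : β + α ∈ Φ) (hc' : RootChain Φ α (β + α) p' q') :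
    (p':ℤ) = (p:ℤ) - 1 ∧ (q':ℤ) = (q:ℤ) + 1 := by
  have hβa' : ∀ t : ℚ, β + α ≠ t • α := fun t h =>
    hβa (t - 1) (by linear_combination (norm := module) h)
  have ex := string_exact hRS ha hβ hβa hc
  have ex' := string_exact hRS ha hβ' hβa' hc'
  have key : ∀ k : ℤ, β + α + (k:ℚ) • α = β + ((k + 1 : ℤ):ℚ) • α := by
    intro k; push_cast; module
  have t1 : (p':ℤ) + 1 ≤ p := by
    have h := (ex' p').mpr ⟨by omega, le_rfl⟩
    rw [key] at h
    exact ((ex _).mp h).2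
  have t2 : (p:ℤ) - 1 ≤ p' := by
    have h : β + ((p:ℤ):ℚ) • α ∈ Φ := (ex p).mpr ⟨by omega, le_rfl⟩
    have h' : β + α + (((p:ℤ) - 1 : ℤ):ℚ) • α ∈ Φ := by
      rw [key]
      have : (p:ℤ) - 1 + 1 = (p:ℤ) := by omega
      rw [this]; exact h
    exact ((ex' _).mp h').2
  have t3 : (q':ℤ) ≤ (q:ℤ) + 1 := by
    have h := (ex' (-(q':ℤ))).mpr ⟨le_rfl, by omega⟩
    rw [key] at h
    have := ((ex _).mp h).1
    omega
  have t4 : (q:ℤ) + 1 ≤ q' := by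
    have h : β + ((-(q:ℤ) : ℤ):ℚ) • α ∈ Φ := (ex (-(q:ℤ))).mpr ⟨le_rfl, by omega⟩
    have h' : β + α + ((-(q:ℤ) - 1 : ℤ):ℚ) • α ∈ Φ := by
      rw [key]
      have : -(q:ℤ) - 1 + 1 = -(q:ℤ) := by omega
      rw [this]; exact h
    have := ((ex' _).mp h').1
    omega
  omega

lemma chain_shift_down (hRS : IsRootSystem B Φ) (ha : α ∈ Φ) (hβ : β ∈ Φ)
    (hβa : ∀ t : ℚ, β ≠ t • α) {p q p' q' : ℕ} (hc : RootChain Φ α β p q)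
    (hβ' : β - α ∈ Φ) (hc' : RootChain Φ α (β - α) p' q') :
    (p':ℤ) = (p:ℤ) + 1 ∧ (q':ℤ) = (q:ℤ) - 1 := by
  have hβa' : ∀ t : ℚ, β - α ≠ t • α := fun t h =>
    hβa (t + 1) (by linear_combination (norm := module) h)
  have ex := string_exact hRS ha hβ hβa hc
  have ex' := string_exact hRS ha hβ' hβa' hc'
  have key : ∀ k : ℤ, β - α + (k:ℚ) • α = β + ((k - 1 : ℤ):ℚ) • α := by
    intro k; push_cast; module
  have t1 : (p':ℤ) - 1 ≤ p := by
    have h := (ex' p').mpr ⟨by omega, le_rfl⟩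
    rw [key] at h
    have := ((ex _).mp h).2
    omega
  have t2 : (p:ℤ) + 1 ≤ p' := by
    have h : β + ((p:ℤ):ℚ) • α ∈ Φ := (ex p).mpr ⟨by omega, le_rfl⟩
    have h' : β - α + (((p:ℤ) + 1 : ℤ):ℚ) • α ∈ Φ := by
      rw [key]
      have : (p:ℤ) + 1 - 1 = (p:ℤ) := by omega
      rw [this]; exact h
    exact ((ex' _).mp h').2
  have t3 : (q':ℤ) ≤ (q:ℤ) - 1 := by
    have h := (ex' (-(q':ℤ))).mpr ⟨le_rfl, by omega⟩
    rw [key] at h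
    have := ((ex _).mp h).1
    omega
  have t4 : (q:ℤ) - 1 ≤ q' := by
    have h : β + ((-(q:ℤ) : ℤ):ℚ) • α ∈ Φ := (ex (-(q:ℤ))).mpr ⟨le_rfl, by omega⟩
    have h' : β - α + ((-(q:ℤ) + 1 : ℤ):ℚ) • α ∈ Φ := by
      rw [key]
      have : -(q:ℤ) + 1 - 1 = -(q:ℤ) := by omega
      rw [this]; exact h
    have := ((ex' _).mp h').1
    omega
  omega

end Aux

theorem e_f_commutator_eq_h
    {I : Type*} [Fintype I]
    (B : E →ₗ[ℚ] E →ₗ[ℚ] ℚ) (Φ : Set E) (hRS : IsRootSystem B Φ)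
    (a : I → E) (hbase : IsBase Φ a)
    {M : Type*} [AddCommGroup M] [Module ℂ M]
    (b : Module.Basis (I ⊕ {x : E // x ∈ Φ}) ℂ M)
    (e f h : I → M →ₗ[ℂ] M) (mp mm : I → E → ℕ)
(hm : ∀ i, ∀ α ∈ Φ, α ≠ a i → α ≠ -a i →
      ∃ p q : ℕ, RootChain Φ (a i) α p q ∧ mp i α = p + 1 ∧ mm i α = q + 1)
(he_u : ∀ i j, e i (b (Sum.inl j)) =
      ((|pairingB B (a i) (a j)| : ℚ) : ℂ) • b (Sum.inr ⟨a i, hbase.mem i⟩))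
    (he_v : ∀ i (α : {x : E // x ∈ Φ}) (hmem : (α : E) + a i ∈ Φ),
      e i (b (Sum.inr α)) = ((mm i (α : E) : ℕ) : ℂ) • b (Sum.inr ⟨(α : E) + a i, hmem⟩))
    (he_neg : ∀ i (α : {x : E // x ∈ Φ}), (α : E) = -a i →
      e i (b (Sum.inr α)) = b (Sum.inl i))
    (he_zero : ∀ i (α : {x : E // x ∈ Φ}), (α : E) + a i ∉ Φ → (α : E) ≠ -a i →
      e i (b (Sum.inr α)) = 0)
    (hf_u : ∀ i j (β : {x : E // x ∈ Φ}), (β : E) = -a i →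
      f i (b (Sum.inl j)) = ((|pairingB B (a i) (a j)| : ℚ) : ℂ) • b (Sum.inr β))
    (hf_v : ∀ i (α : {x : E // x ∈ Φ}) (hmem : (α : E) - a i ∈ Φ),
      f i (b (Sum.inr α)) = ((mp i (α : E) : ℕ) : ℂ) • b (Sum.inr ⟨(α : E) - a i, hmem⟩))
    (hf_pos : ∀ i (α : {x : E // x ∈ Φ}), (α : E) = a i →
      f i (b (Sum.inr α)) = b (Sum.inl i))
    (hf_zero : ∀ i (α : {x : E // x ∈ Φ}), (α : E) - a i ∉ Φ → (α : E) ≠ a i →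
      f i (b (Sum.inr α)) = 0)
(hh_u : ∀ i j, h i (b (Sum.inl j)) = 0)
    (hh_v : ∀ i (α : {x : E // x ∈ Φ}),
      h i (b (Sum.inr α)) = ((pairingB B (α : E) (a i) : ℚ) : ℂ) • b (Sum.inr α)) :
    ∀ i, e i ∘ₗ f i - f i ∘ₗ e i = h i := by
  intro i
  have hai : a i ∈ Φ := hbase.mem i
  have hai0 : a i ≠ 0 := hRS.ne_zero _ hai
  have hnai : -a i ∈ Φ := Aux.neg_mem hRS hai
  have h2ai : a i + a i ∉ Φ := by
    intro hmem
    have : (2:ℚ) • a i ∈ Φ := by rwa [two_smul]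
    rcases hRS.reduced (a i) hai 2 this with h' | h' <;> norm_num at h'
  have hn2ai : -a i - a i ∉ Φ := by
    intro hmem
    have : (-2:ℚ) • a i ∈ Φ := by
      have : (-2:ℚ) • a i = -a i - a i := by module
      rwa [this]
    rcases hRS.reduced (a i) hai (-2) this with h' | h' <;> norm_num at h'
  have haine : a i ≠ -a i := by
    intro h'
    apply hai0
    have : (2:ℚ) • a i = 0 := by rw [two_smul]; nth_rewrite 2 [h']; abel
    simpa using (smul_eq_zero.mp this).resolve_left (by norm_num)
  have hpself : pairingB B (a i) (a i) = 2 := Aux.pairing_self hRS hai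
  apply b.ext
  rintro (j | α)
  · -- case u_j
    simp only [LinearMap.sub_apply, LinearMap.comp_apply]
    rw [hf_u i j ⟨-a i, hnai⟩ rfl, map_smul, he_neg i ⟨-a i, hnai⟩ rfl,
      he_u i j, map_smul, hf_pos i ⟨a i, hai⟩ rfl, hh_u, sub_self]
  · simp only [LinearMap.sub_apply, LinearMap.comp_apply]
    by_cases hα1 : (α : E) = a i
    · -- α = a i
      have hαeq : α = (⟨a i, hai⟩ : {x : E // x ∈ Φ}) := Subtype.ext hα1
      have hez : e i (b (Sum.inr α)) = 0 := by
        apply he_zero i α (by rw [hα1]; exact h2ai) (by rw [hα1]; exact haine)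
      rw [hf_pos i α hα1, he_u i i, hez, map_zero, hh_v, hα1, hpself, ← hαeq]
      norm_num
    · by_cases hα2 : (α : E) = -a i
      · -- α = -a i
        have hfz : f i (b (Sum.inr α)) = 0 := by
          apply hf_zero i α (by rw [hα2]; exact hn2ai)
            (by rw [hα2]; exact fun h' => haine h'.symm)
        have hpneg : pairingB B (-a i) (a i) = -2 := by
          have haa := (Aux.baa_pos hRS hai).ne'
          unfold pairingB
          simp only [map_neg, LinearMap.neg_apply]
          field_simp
        rw [hfz, map_zero, he_neg i α hα2, hf_u i i α hα2, hh_v, hα2, hpneg, hpself]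
        norm_num
      · -- generic case
        obtain ⟨p, q, hc, hmp, hmq⟩ := hm i (α : E) α.2 hα1 hα2
        have hβa : ∀ t : ℚ, (α : E) ≠ t • a i := by
          intro t ht
          rcases hRS.reduced (a i) hai t (ht ▸ α.2) with h' | h'
          · exact hα1 (by rw [ht, h', one_smul])
          · exact hα2 (by rw [ht, h', neg_one_smul])
        have hpair : pairingB B (α : E) (a i) = (q : ℚ) - (p : ℚ) :=
          Aux.string_pairing hRS hai α.2 hβa hc
        -- f ∘ e
        have hF : f i (e i (b (Sum.inr α))) = ((p : ℂ) * ((q : ℂ) + 1)) • b (Sum.inr α) := by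
          by_cases hp : p = 0
          · have hnotmem : (α : E) + a i ∉ Φ := by
              have := hc.2.2
              rw [hp] at this
              simpa using this
            rw [he_zero i α hnotmem hα2, map_zero, hp]
            norm_num
          · have hmem1 : (α : E) + a i ∈ Φ := by
              have := hc.1 1 (by omega) (by omega)
              simpa using this
            have hne1 : (α : E) + a i ≠ a i := fun h' => by
              have : (α : E) = 0 := by
                have := sub_eq_zero.mpr h'
                simpa using this
              exact hRS.ne_zero _ α.2 this
            have hne2 : (α : E) + a i ≠ -a i := fun h' =>
              hβa (-2) (by linear_combination (norm := module) h')
            obtain ⟨p', q', hc', hmp', hmq'⟩ := hm i ((α : E) + a i) hmem1 hne1 hne2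
            have hshift := Aux.chain_shift_up hRS hai α.2 hβa hc hmem1 hc'
            have hmpval : mp i ((α : E) + a i) = p := by
              rw [hmp']
              omega
            have hmem2 : (α : E) + a i - a i ∈ Φ := by
              rw [add_sub_cancel_right]; exact α.2
            have hsub : (⟨(α : E) + a i - a i, hmem2⟩ : {x : E // x ∈ Φ}) = α :=
              Subtype.ext (by simp)
            rw [he_v i α hmem1, map_smul, hf_v i ⟨(α : E) + a i, hmem1⟩ hmem2]
            simp only [hsub]
            rw [hmpval, hmq, smul_smul]
            congr 1
            push_cast
            ring
        -- e ∘ f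
        have hG : e i (f i (b (Sum.inr α))) = (((p : ℂ) + 1) * (q : ℂ)) • b (Sum.inr α) := by
          by_cases hq : q = 0
          · have hnotmem : (α : E) - a i ∉ Φ := by
              have := hc.2.1
              rw [hq] at this
              simpa using this
            rw [hf_zero i α hnotmem hα1, map_zero, hq]
            norm_num
          · have hmem1 : (α : E) - a i ∈ Φ := by
              have := hc.1 (-1) (by omega) (by omega)
              have heq : (α : E) + ((-1 : ℤ) : ℚ) • a i = (α : E) - a i := by
                push_cast; module
              rwa [heq] at this
            have hne1 : (α : E) - a i ≠ a i := fun h' =>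
              hβa 2 (by linear_combination (norm := module) h')
            have hne2 : (α : E) - a i ≠ -a i := fun h' =>
              hβa 0 (by linear_combination (norm := module) h')
            obtain ⟨p', q', hc', hmp', hmq'⟩ := hm i ((α : E) - a i) hmem1 hne1 hne2
            have hshift := Aux.chain_shift_down hRS hai α.2 hβa hc hmem1 hc'
            have hmqval : mm i ((α : E) - a i) = q := by
              rw [hmq']
              omega
            have hmem2 : (α : E) - a i + a i ∈ Φ := by
              rw [sub_add_cancel]; exact α.2
            have hsub : (⟨(α : E) - a i + a i, hmem2⟩ : {x : E // x ∈ Φ}) = α :=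
              Subtype.ext (by simp)
            rw [hf_v i α hmem1, map_smul, he_v i ⟨(α : E) - a i, hmem1⟩ hmem2]
            simp only [hsub]
            rw [hmqval, hmp, smul_smul]
            congr 1
            push_cast
            ring
        rw [hF, hG, hh_v, hpair, ← sub_smul]
        congr 1
        push_cast
        ring
end
end

section
/- Let ω : M → M be the linear map with ω(u_j) = u_j and ω(v_α) = v_{−α}. Then ω² = id_M, ω ∘ e_i = f_i ∘ ω, and ω ∘ h_i = −h_i ∘ ω for all i ∈ I. -/
noncomputable section

variable {E : Type*} [AddCommGroup E] [Module ℚ E]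

lemma neg_mem_of_RS {B : E →ₗ[ℚ] E →ₗ[ℚ] ℚ} {Φ : Set E} (hRS : IsRootSystem B Φ)
    {α : E} (hα : α ∈ Φ) : -α ∈ Φ := by
  have h := hRS.reflMem α hα α hα
  have hBne : B α α ≠ 0 := ne_of_gt (hRS.posdef α (hRS.ne_zero α hα))
  have hp : pairingB B α α = 2 := by
    rw [pairingB]; field_simp
  rw [hp] at h
  have : α - (2:ℚ) • α = -α := by
    rw [two_smul]; abel
  rwa [this] at h

lemma pairingB_neg_left (B : E →ₗ[ℚ] E →ₗ[ℚ] ℚ) (β α : E) :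
    pairingB B (-β) α = -pairingB B β α := by
  simp [pairingB, neg_div]

lemma rootChain_unique {Φ : Set E} {γ β : E} {p q p' q' : ℕ}
    (h1 : RootChain Φ γ β p q) (h2 : RootChain Φ γ β p' q') : p = p' ∧ q = q' := by
  obtain ⟨m1, q1, p1⟩ := h1
  obtain ⟨m2, q2, p2⟩ := h2
  constructor
  · by_contra hne
    rcases Nat.lt_or_ge p p' with hlt | hge
    · apply p1
      have := m2 ((p:ℤ)+1) (by omega) (by omega)
      have hc : ((((p:ℤ)+1 : ℤ)) : ℚ) = (p:ℚ)+1 := by push_cast; ring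
      rwa [hc] at this
    · have hlt : p' < p := by omega
      apply p2
      have := m1 ((p':ℤ)+1) (by omega) (by omega)
      have hc : ((((p':ℤ)+1 : ℤ)) : ℚ) = (p':ℚ)+1 := by push_cast; ring
      rwa [hc] at this
  · by_contra hne
    rcases Nat.lt_or_ge q q' with hlt | hge
    · apply q1
      have := m2 (-((q:ℤ)+1)) (by omega) (by omega)
      have hc : β + (((-((q:ℤ)+1)) : ℤ) : ℚ) • γ = β - ((q:ℚ)+1) • γ := by
        push_cast; rw [neg_smul]; abel
      rwa [hc] at this
    · have hlt : q' < q := by omega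
      apply q2
      have := m1 (-((q':ℤ)+1)) (by omega) (by omega)
      have hc : β + (((-((q':ℤ)+1)) : ℤ) : ℚ) • γ = β - ((q':ℚ)+1) • γ := by
        push_cast; rw [neg_smul]; abel
      rwa [hc] at this

lemma rootChain_neg {B : E →ₗ[ℚ] E →ₗ[ℚ] ℚ} {Φ : Set E} (hRS : IsRootSystem B Φ)
    {γ β : E} {p q : ℕ} (h : RootChain Φ γ β p q) : RootChain Φ γ (-β) q p := by
  obtain ⟨m, hq, hp⟩ := h
  refine ⟨fun k hk1 hk2 => ?_, fun hc => ?_, fun hc => ?_⟩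
  · have := m (-k) (by omega) (by omega)
    have heq : -β + (k:ℚ) • γ = -(β + ((-k : ℤ) : ℚ) • γ) := by push_cast; module
    rw [heq]
    exact neg_mem_of_RS hRS this
  · apply hp
    have heq : β + ((p:ℚ)+1) • γ = -(-β - ((p:ℚ)+1) • γ) := by module
    rw [heq]
    exact neg_mem_of_RS hRS hc
  · apply hq
    have heq : β - ((q:ℚ)+1) • γ = -(-β + ((q:ℚ)+1) • γ) := by module
    rw [heq]
    exact neg_mem_of_RS hRS hc

theorem omega_involution_swaps_e_f
    {I : Type*} [Fintype I]
    (B : E →ₗ[ℚ] E →ₗ[ℚ] ℚ) (Φ : Set E) (hRS : IsRootSystem B Φ)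
    (a : I → E) (hbase : IsBase Φ a)
    {M : Type*} [AddCommGroup M] [Module ℂ M]
    (b : Module.Basis (I ⊕ {x : E // x ∈ Φ}) ℂ M)
    (e f h : I → M →ₗ[ℂ] M) (mp mm : I → E → ℕ)
(hm : ∀ i, ∀ α ∈ Φ, α ≠ a i → α ≠ -a i →
      ∃ p q : ℕ, RootChain Φ (a i) α p q ∧ mp i α = p + 1 ∧ mm i α = q + 1)
(he_u : ∀ i j, e i (b (Sum.inl j)) =
      ((|pairingB B (a i) (a j)| : ℚ) : ℂ) • b (Sum.inr ⟨a i, hbase.mem i⟩))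
    (he_v : ∀ i (α : {x : E // x ∈ Φ}) (hmem : (α : E) + a i ∈ Φ),
      e i (b (Sum.inr α)) = ((mm i (α : E) : ℕ) : ℂ) • b (Sum.inr ⟨(α : E) + a i, hmem⟩))
    (he_neg : ∀ i (α : {x : E // x ∈ Φ}), (α : E) = -a i →
      e i (b (Sum.inr α)) = b (Sum.inl i))
    (he_zero : ∀ i (α : {x : E // x ∈ Φ}), (α : E) + a i ∉ Φ → (α : E) ≠ -a i →
      e i (b (Sum.inr α)) = 0)
    (hf_u : ∀ i j (β : {x : E // x ∈ Φ}), (β : E) = -a i →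
      f i (b (Sum.inl j)) = ((|pairingB B (a i) (a j)| : ℚ) : ℂ) • b (Sum.inr β))
    (hf_v : ∀ i (α : {x : E // x ∈ Φ}) (hmem : (α : E) - a i ∈ Φ),
      f i (b (Sum.inr α)) = ((mp i (α : E) : ℕ) : ℂ) • b (Sum.inr ⟨(α : E) - a i, hmem⟩))
    (hf_pos : ∀ i (α : {x : E // x ∈ Φ}), (α : E) = a i →
      f i (b (Sum.inr α)) = b (Sum.inl i))
    (hf_zero : ∀ i (α : {x : E // x ∈ Φ}), (α : E) - a i ∉ Φ → (α : E) ≠ a i →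
      f i (b (Sum.inr α)) = 0)
(hh_u : ∀ i j, h i (b (Sum.inl j)) = 0)
    (hh_v : ∀ i (α : {x : E // x ∈ Φ}),
      h i (b (Sum.inr α)) = ((pairingB B (α : E) (a i) : ℚ) : ℂ) • b (Sum.inr α))
    (ω : M →ₗ[ℂ] M)
    (hω_u : ∀ j, ω (b (Sum.inl j)) = b (Sum.inl j))
    (hω_v : ∀ (α β : {x : E // x ∈ Φ}), (β : E) = -(α : E) →
      ω (b (Sum.inr α)) = b (Sum.inr β)) :
    ω ∘ₗ ω = LinearMap.id ∧
      (∀ i, ω ∘ₗ e i = f i ∘ₗ ω) ∧ (∀ i, ω ∘ₗ h i = -(h i ∘ₗ ω)) := by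
  classical
  have negmem : ∀ {x : E}, x ∈ Φ → -x ∈ Φ := fun hx => neg_mem_of_RS hRS hx
  -- mm i α = mp i (-α) when α ∈ Φ, α ≠ ± a i
  have hmm_mp : ∀ i, ∀ α ∈ Φ, α ≠ a i → α ≠ -a i → mm i α = mp i (-α) := by
    intro i α hα h1 h2
    obtain ⟨p, q, hch, hmp, hmq⟩ := hm i α hα h1 h2
    have hna : -α ∈ Φ := negmem hα
    have hn1 : -α ≠ a i := by intro h; apply h2; rw [← h]; simp
    have hn2 : -α ≠ -a i := by intro h; apply h1; have := neg_injective h; exact this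
    obtain ⟨p', q', hch', hmp', hmq'⟩ := hm i (-α) hna hn1 hn2
    have := rootChain_unique (rootChain_neg hRS hch) hch'
    omega
  refine ⟨?_, ?_, ?_⟩
  · -- involution
    apply b.ext
    rintro (j | α)
    · simp [hω_u j]
    · have hna : -(α : E) ∈ Φ := negmem α.2
      simp only [LinearMap.comp_apply, LinearMap.id_apply]
      rw [hω_v α ⟨-(α:E), hna⟩ rfl, hω_v ⟨-(α:E), hna⟩ α (by simp)]
  · -- ω ∘ e = f ∘ ω
    intro i
    apply b.ext
    rintro (j | α)
    · simp only [LinearMap.comp_apply]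
      rw [he_u i j, map_smul, hω_u j,
        hω_v ⟨a i, hbase.mem i⟩ ⟨-a i, negmem (hbase.mem i)⟩ rfl,
        hf_u i j ⟨-a i, negmem (hbase.mem i)⟩ rfl]
    · simp only [LinearMap.comp_apply]
      have hna : -(α : E) ∈ Φ := negmem α.2
      rw [hω_v α ⟨-(α:E), hna⟩ rfl]
      by_cases h1 : (α : E) = -a i
      · rw [he_neg i α h1, hω_u i, hf_pos i ⟨-(α:E), hna⟩ (by simp [h1])]
      · by_cases h2 : (α : E) + a i ∈ Φ
        · -- generic case
          have hαa : (α : E) ≠ a i := by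
            intro h
            have h2' : ((2:ℚ)) • a i ∈ Φ := by
              rw [two_smul]; rw [h] at h2; exact h2
            rcases hRS.reduced (a i) (hbase.mem i) 2 h2' with h | h <;> norm_num at h
          have hsub : -(α : E) - a i ∈ Φ := by
            have : -(α : E) - a i = -((α:E) + a i) := by abel
            rw [this]; exact negmem h2
          rw [he_v i α h2, map_smul,
            hω_v ⟨(α:E) + a i, h2⟩ ⟨-(α:E) - a i, hsub⟩ (by push_cast; abel),
            hf_v i ⟨-(α:E), hna⟩ hsub]
          have : mm i (α : E) = mp i (-(α:E)) := hmm_mp i (α:E) α.2 hαa h1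
          rw [this]
        · -- zero case
          have hz1 : -(α : E) - a i ∉ Φ := by
            intro hc
            apply h2
            have : (α : E) + a i = -(-(α:E) - a i) := by abel
            rw [this]; exact negmem hc
          have hz2 : -(α : E) ≠ a i := fun h => h1 (by rw [← neg_neg (α:E), h])
          rw [he_zero i α h2 h1, map_zero, hf_zero i ⟨-(α:E), hna⟩ hz1 hz2]
  · -- ω ∘ h = -(h ∘ ω)
    intro i
    apply b.ext
    rintro (j | α)
    · simp [hω_u, hh_u]
    · simp only [LinearMap.comp_apply, LinearMap.neg_apply]
      have hna : -(α : E) ∈ Φ := negmem α.2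
      rw [hh_v i α, map_smul, hω_v α ⟨-(α:E), hna⟩ rfl, hh_v i ⟨-(α:E), hna⟩]
      simp [pairingB_neg_left]
end
end
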